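/- arXiv:1910.05022 — 5 statements merged into one kernel-verified Lean document; each statement's English description precedes it below -/
import Mathlib

section
/- Let d ≥ 2, n ≥ 1, and let (B_{ij})_{1 ≤ i < j ≤ d} be a family of n × n complex matrices (set B_{ji} := B_{ij}). For a point w in the configuration space C_d = { w ∈ ℂ^d : w_i ≠ w_j for i ≠ j } and a vector u ∈ ℂ^d, define A_w(u) = Σ_{1 ≤ i < j ≤ d} ((u_i − u_j)/(w_i − w_j)) · B_{ij}. Then the Kohno connection d + Σ_{i<j} B_{ij} d(w_i − w_j)/(w_i − w_j) is flat — equivalently (since each scalar one-form d(w_i − w_j)/(w_i − w_j) is closed), the matrices A_w(u) and A_w(v) commute for every w ∈ C_d and every u, v ∈ ℂ^d — if and only if the family (B_{ij}) satisfies the infinitesimal pure braid relations. -/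
open Filter Topology

lemma kohnoLimitCommute {d n : ℕ} (B : Fin d → Fin d → Matrix (Fin n) (Fin n) ℂ)
    (H : ∀ w : Fin d → ℂ, (∀ i j : Fin d, i ≠ j → w i ≠ w j) →
      ∀ u v : Fin d → ℂ,
        Commute
          (∑ p ∈ Finset.univ.filter (fun p : Fin d × Fin d => p.1 < p.2),
            (((u p.1 - u p.2) / (w p.1 - w p.2)) • B p.1 p.2))
          (∑ p ∈ Finset.univ.filter (fun p : Fin d × Fin d => p.1 < p.2),
            (((v p.1 - v p.2) / (w p.1 - w p.2)) • B p.1 p.2)))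
    (c a : Fin d → ℂ) (hca : ∀ p q : Fin d, p ≠ q → c p = c q → a p ≠ a q)
    (u v : Fin d → ℂ) :
    Commute
      (∑ p ∈ Finset.univ.filter (fun p : Fin d × Fin d => p.1 < p.2),
        (if c p.1 = c p.2 then (u p.1 - u p.2) / (a p.1 - a p.2) else 0) • B p.1 p.2)
      (∑ p ∈ Finset.univ.filter (fun p : Fin d × Fin d => p.1 < p.2),
        (if c p.1 = c p.2 then (v p.1 - v p.2) / (a p.1 - a p.2) else 0) • B p.1 p.2) := by
  set L := 𝓝[≠] (0:ℂ) with hL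
  set w : ℂ → Fin d → ℂ := fun ε m => c m + ε * a m with hwdef
  have hev : ∀ᶠ ε in L, ∀ i j : Fin d, i ≠ j → w ε i ≠ w ε j := by
    rw [eventually_all]
    intro i
    rw [eventually_all]
    intro j
    by_cases hij : i = j
    · exact Eventually.of_forall (fun _ h => absurd hij h)
    · refine Eventually.mono ?_ (fun ε h _ => h)
      by_cases hc : c i = c j
      · have ha := hca i j hij hc
        refine eventually_mem_nhdsWithin.mono (fun ε (hε : ε ∈ ({0}ᶜ : Set ℂ)) => ?_)
        simp only [Set.mem_compl_iff, Set.mem_singleton_iff] at hε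
        simp only [w]
        rw [hc]
        intro heq
        exact ha (mul_left_cancel₀ hε (add_left_cancel heq))
      · have ht : Tendsto (fun ε : ℂ => w ε i - w ε j) L (𝓝 (c i - c j)) := by
          have hcont : Continuous (fun ε : ℂ => (c i + ε * a i) - (c j + ε * a j)) := by
            fun_prop
          have := hcont.tendsto 0
          simp only [zero_mul, add_zero] at this
          exact this.mono_left nhdsWithin_le_nhds
        have hne : c i - c j ≠ 0 := sub_ne_zero.mpr hc
        exact (ht.eventually_ne hne).mono (fun ε h => sub_ne_zero.mp h)
  have key : ∀ u : Fin d → ℂ,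
      Tendsto (fun ε => ε • ∑ p ∈ Finset.univ.filter (fun p : Fin d × Fin d => p.1 < p.2),
          (((u p.1 - u p.2) / (w ε p.1 - w ε p.2)) • B p.1 p.2)) L
        (𝓝 (∑ p ∈ Finset.univ.filter (fun p : Fin d × Fin d => p.1 < p.2),
          (if c p.1 = c p.2 then (u p.1 - u p.2) / (a p.1 - a p.2) else 0) • B p.1 p.2)) := by
    intro u
    simp only [Finset.smul_sum, smul_smul]
    apply tendsto_finset_sum
    intro p hp
    simp only [Finset.mem_filter] at hp
    have hne : p.1 ≠ p.2 := ne_of_lt hp.2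
    by_cases hc : c p.1 = c p.2
    · have ha : a p.1 - a p.2 ≠ 0 := sub_ne_zero.mpr (hca _ _ hne hc)
      rw [if_pos hc]
      apply Tendsto.smul_const
      apply tendsto_const_nhds.congr'
      refine eventually_mem_nhdsWithin.mono (fun ε (hε : ε ∈ ({0}ᶜ : Set ℂ)) => ?_)
      simp only [Set.mem_compl_iff, Set.mem_singleton_iff] at hε
      have hden : w ε p.1 - w ε p.2 = ε * (a p.1 - a p.2) := by
        simp only [w]; rw [hc]; ring
      dsimp only
      rw [hden]
      field_simp
    · rw [if_neg hc, zero_smul]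
      have hden : Tendsto (fun ε : ℂ => w ε p.1 - w ε p.2) L (𝓝 (c p.1 - c p.2)) := by
        have hcont : Continuous (fun ε : ℂ => (c p.1 + ε * a p.1) - (c p.2 + ε * a p.2)) := by
          fun_prop
        have := hcont.tendsto 0
        simp only [zero_mul, add_zero] at this
        exact this.mono_left nhdsWithin_le_nhds
      have hne2 : c p.1 - c p.2 ≠ 0 := sub_ne_zero.mpr hc
      have hsc : Tendsto (fun ε : ℂ => ε * ((u p.1 - u p.2) / (w ε p.1 - w ε p.2))) L (𝓝 0) := by
        have h1 : Tendsto (fun ε : ℂ => ε) L (𝓝 0) := tendsto_id.mono_right nhdsWithin_le_nhds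
        have h2 : Tendsto (fun ε : ℂ => (u p.1 - u p.2) / (w ε p.1 - w ε p.2)) L
            (𝓝 ((u p.1 - u p.2) / (c p.1 - c p.2))) := tendsto_const_nhds.div hden hne2
        simpa using h1.mul h2
      have := hsc.smul_const (B p.1 p.2)
      simpa using this
  have hcomm : ∀ᶠ ε in L,
      (ε • ∑ p ∈ Finset.univ.filter (fun p : Fin d × Fin d => p.1 < p.2),
          (((u p.1 - u p.2) / (w ε p.1 - w ε p.2)) • B p.1 p.2)) *
      (ε • ∑ p ∈ Finset.univ.filter (fun p : Fin d × Fin d => p.1 < p.2),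
          (((v p.1 - v p.2) / (w ε p.1 - w ε p.2)) • B p.1 p.2)) =
      (ε • ∑ p ∈ Finset.univ.filter (fun p : Fin d × Fin d => p.1 < p.2),
          (((v p.1 - v p.2) / (w ε p.1 - w ε p.2)) • B p.1 p.2)) *
      (ε • ∑ p ∈ Finset.univ.filter (fun p : Fin d × Fin d => p.1 < p.2),
          (((u p.1 - u p.2) / (w ε p.1 - w ε p.2)) • B p.1 p.2)) := by
    refine hev.mono (fun ε h => ?_)
    have hc := H (w ε) h u v
    exact ((hc.smul_left ε).smul_right ε).eq
  exact tendsto_nhds_unique (Tendsto.congr' hcomm ((key u).mul (key v))) ((key v).mul (key u))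

lemma kohnoFwdTriple {d n : ℕ} (B : Fin d → Fin d → Matrix (Fin n) (Fin n) ℂ)
    (H : ∀ w : Fin d → ℂ, (∀ i j : Fin d, i ≠ j → w i ≠ w j) →
      ∀ u v : Fin d → ℂ,
        Commute
          (∑ p ∈ Finset.univ.filter (fun p : Fin d × Fin d => p.1 < p.2),
            (((u p.1 - u p.2) / (w p.1 - w p.2)) • B p.1 p.2))
          (∑ p ∈ Finset.univ.filter (fun p : Fin d × Fin d => p.1 < p.2),
            (((v p.1 - v p.2) / (w p.1 - w p.2)) • B p.1 p.2)))
    (i j k : Fin d) (hij : i < j) (hjk : j < k) :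
    Commute (B i j) (B i k + B j k) ∧ Commute (B i j + B i k) (B j k) := by
  have hik : i < k := hij.trans hjk
  set c : Fin d → ℂ := fun m => if m = i ∨ m = j ∨ m = k then 0 else ((m : ℕ) : ℂ) + 1 with hcdef
  have hclass : ∀ x y : Fin d, x ≠ y → c x = c y →
      (x = i ∨ x = j ∨ x = k) ∧ (y = i ∨ y = j ∨ y = k) := by
    intro x y hxy hcc
    by_cases hx : x = i ∨ x = j ∨ x = k <;> by_cases hy : y = i ∨ y = j ∨ y = k
    · exact ⟨hx, hy⟩
    · exfalso; simp only [hcdef, if_pos hx, if_neg hy] at hcc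
      exact Nat.cast_add_one_ne_zero (y : ℕ) hcc.symm
    · exfalso; simp only [hcdef, if_neg hx, if_pos hy] at hcc
      exact Nat.cast_add_one_ne_zero (x : ℕ) hcc
    · exfalso; simp only [hcdef, if_neg hx, if_neg hy] at hcc
      have hxy2 : (x : ℕ) + 1 = (y : ℕ) + 1 := by exact_mod_cast hcc
      exact hxy (Fin.val_injective (by omega))
  have main : ∀ a₁ a₂ a₃ p q r : ℂ, a₁ ≠ a₂ → a₁ ≠ a₃ → a₂ ≠ a₃ →
      1 / (a₁ - a₂) = p → 1 / (a₁ - a₃) = q → 1 / (a₂ - a₃) = r →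
      Commute (p • B i j + q • B i k) ((-p) • B i j + r • B j k) := by
    intro a₁ a₂ a₃ p q r h12 h13 h23 hp hq hr
    set a : Fin d → ℂ := fun m => if m = i then a₁ else if m = j then a₂ else
        if m = k then a₃ else 0 with hadef
    have hai : a i = a₁ := by simp [hadef]
    have haj : a j = a₂ := by simp [hadef, hij.ne']
    have hak : a k = a₃ := by simp [hadef, hik.ne', hjk.ne']
    have hca : ∀ x y : Fin d, x ≠ y → c x = c y → a x ≠ a y := by
      intro x y hxy hcc
      obtain ⟨hx, hy⟩ := hclass x y hxy hcc
      rcases hx with rfl | rfl | rfl <;> rcases hy with rfl | rfl | rfl <;>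
        first
          | exact absurd rfl hxy
          | (rw [hai, haj]; exact h12)
          | (rw [hai, hak]; exact h13)
          | (rw [haj, hak]; exact h23)
          | (rw [haj, hai]; exact h12.symm)
          | (rw [hak, hai]; exact h13.symm)
          | (rw [hak, haj]; exact h23.symm)
    have hcij : c i = c j := by simp [hcdef]
    have hcik : c i = c k := by simp [hcdef]
    have hcjk : c j = c k := by simp [hcdef]
    have hT : ∀ u₀ : Fin d → ℂ,
        (∑ p ∈ Finset.univ.filter (fun p : Fin d × Fin d => p.1 < p.2),
          (if c p.1 = c p.2 then (u₀ p.1 - u₀ p.2) / (a p.1 - a p.2) else 0) • B p.1 p.2)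
        = ((u₀ i - u₀ j) / (a₁ - a₂)) • B i j +
            (((u₀ i - u₀ k) / (a₁ - a₃)) • B i k + ((u₀ j - u₀ k) / (a₂ - a₃)) • B j k) := by
      intro u₀
      have hsub : ({(i,j),(i,k),(j,k)} : Finset (Fin d × Fin d)) ⊆
          Finset.univ.filter (fun p : Fin d × Fin d => p.1 < p.2) := by
        intro x hx
        simp only [Finset.mem_insert, Finset.mem_singleton] at hx
        simp only [Finset.mem_filter, Finset.mem_univ, true_and]
        rcases hx with rfl | rfl | rfl
        exacts [hij, hik, hjk]
      have hzero : ∀ x ∈ Finset.univ.filter (fun p : Fin d × Fin d => p.1 < p.2),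
          x ∉ ({(i,j),(i,k),(j,k)} : Finset (Fin d × Fin d)) →
          (if c x.1 = c x.2 then (u₀ x.1 - u₀ x.2) / (a x.1 - a x.2) else 0) • B x.1 x.2 = 0 := by
        intro x hxP hxs
        simp only [Finset.mem_filter, Finset.mem_univ, true_and] at hxP
        by_cases hcx : c x.1 = c x.2
        · exfalso
          obtain ⟨h1, h2⟩ := hclass x.1 x.2 (ne_of_lt hxP) hcx
          obtain ⟨x1, x2⟩ := x
          simp only at h1 h2 hxP
          rcases h1 with rfl | rfl | rfl <;> rcases h2 with rfl | rfl | rfl <;>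
            first
              | exact absurd hxP (lt_irrefl _)
              | exact absurd hxP hij.asymm
              | exact absurd hxP hik.asymm
              | exact absurd hxP hjk.asymm
              | (apply hxs; simp)
        · rw [if_neg hcx, zero_smul]
      rw [← Finset.sum_subset hsub hzero]
      rw [Finset.sum_insert (by simp [Prod.ext_iff, hjk.ne, hij.ne]),
        Finset.sum_insert (by simp [Prod.ext_iff, hij.ne, hik.ne]),
        Finset.sum_singleton]
      rw [if_pos hcij, if_pos hcik, if_pos hcjk, hai, haj, hak]
    have hcom := kohnoLimitCommute B H c a hca (fun m => if m = i then (1:ℂ) else 0)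
        (fun m => if m = j then (1:ℂ) else 0)
    rw [hT (fun m => if m = i then (1:ℂ) else 0), hT (fun m => if m = j then (1:ℂ) else 0)] at hcom
    norm_num [hij.ne', hik.ne', hjk.ne', hij.ne, hjk.ne] at hcom
    subst hp hq hr
    convert hcom using 2 <;> module
  have h2 : Commute ((3:ℂ) • B i j + (2:ℂ) • B i k) ((-3:ℂ) • B i j + (6:ℂ) • B j k) := by
    have := main (1/2) (1/6) 0 3 2 6 (by norm_num) (by norm_num) (by norm_num)
      (by norm_num) (by norm_num) (by norm_num)
    convert this using 2 <;> norm_num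
  have h3 : Commute ((6:ℂ) • B i j + (2:ℂ) • B i k) ((-6:ℂ) • B i j + (3:ℂ) • B j k) := by
    have := main (1/2) (1/3) 0 6 2 3 (by norm_num) (by norm_num) (by norm_num)
      (by norm_num) (by norm_num) (by norm_num)
    convert this using 2 <;> norm_num
  have d2 := h2.eq
  have d3 := h3.eq
  constructor
  · have key : (18:ℂ) • (B i j * (B i k + B j k) - (B i k + B j k) * B i j) = 0 := by
      linear_combination (norm := (noncomm_ring; match_scalars <;> norm_num)) 2 * d3 - d2
    have h0 := (smul_eq_zero.mp key).resolve_left (by norm_num)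
    exact sub_eq_zero.mp h0
  · have key : (18:ℂ) • ((B i j + B i k) * B j k - B j k * (B i j + B i k)) = 0 := by
      linear_combination (norm := (noncomm_ring; match_scalars <;> norm_num)) 2 * d2 - d3
    have h0 := (smul_eq_zero.mp key).resolve_left (by norm_num)
    exact sub_eq_zero.mp h0

lemma kohnoFwdDisj {d n : ℕ} (B : Fin d → Fin d → Matrix (Fin n) (Fin n) ℂ)
    (H : ∀ w : Fin d → ℂ, (∀ i j : Fin d, i ≠ j → w i ≠ w j) →
      ∀ u v : Fin d → ℂ,
        Commute
          (∑ p ∈ Finset.univ.filter (fun p : Fin d × Fin d => p.1 < p.2),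
            (((u p.1 - u p.2) / (w p.1 - w p.2)) • B p.1 p.2))
          (∑ p ∈ Finset.univ.filter (fun p : Fin d × Fin d => p.1 < p.2),
            (((v p.1 - v p.2) / (w p.1 - w p.2)) • B p.1 p.2)))
    (i j k l : Fin d) (hij : i < j) (hkl : k < l)
    (hik : i ≠ k) (hil : i ≠ l) (hjk : j ≠ k) (hjl : j ≠ l) :
    Commute (B i j) (B k l) := by
  set c : Fin d → ℂ := fun m => if m = i ∨ m = j then 0 else
      if m = k ∨ m = l then 1 else ((m : ℕ) : ℂ) + 2 with hcdef
  set a : Fin d → ℂ := fun m => if m = i ∨ m = k then 1 else 0 with hadef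
  have hcast1 : ∀ y : Fin d, ((y : ℕ) : ℂ) + 2 ≠ 0 := by
    intro y
    have h0 : (((y : ℕ) + 2 : ℕ) : ℂ) ≠ 0 := by
      rw [Nat.cast_ne_zero]; omega
    push_cast at h0; exact h0
  have hcast2 : ∀ y : Fin d, ((y : ℕ) : ℂ) + 2 ≠ 1 := by
    intro y h
    have h2 : (((y : ℕ) + 2 : ℕ) : ℂ) = ((1 : ℕ) : ℂ) := by push_cast; linear_combination h
    have h3 : (y : ℕ) + 2 = 1 := Nat.cast_inj.mp h2
    omega
  have hval0 : ∀ m : Fin d, (m = i ∨ m = j) → c m = 0 := by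
    intro m hm; simp [hcdef, hm]
  have hval1 : ∀ m : Fin d, ¬(m = i ∨ m = j) → (m = k ∨ m = l) → c m = 1 := by
    intro m h1 hm; simp [hcdef, h1, hm]
  have hval2 : ∀ m : Fin d, ¬(m = i ∨ m = j) → ¬(m = k ∨ m = l) → c m = ((m : ℕ) : ℂ) + 2 := by
    intro m h1 h2; simp [hcdef, h1, h2]
  have hclass : ∀ x y : Fin d, x ≠ y → c x = c y →
      ((x = i ∨ x = j) ∧ (y = i ∨ y = j)) ∨ ((x = k ∨ x = l) ∧ (y = k ∨ y = l)) := by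
    intro x y hxy hcc
    by_cases hx1 : x = i ∨ x = j
    · by_cases hy1 : y = i ∨ y = j
      · exact Or.inl ⟨hx1, hy1⟩
      · exfalso
        rw [hval0 x hx1] at hcc
        by_cases hy2 : y = k ∨ y = l
        · rw [hval1 y hy1 hy2] at hcc; exact zero_ne_one hcc
        · rw [hval2 y hy1 hy2] at hcc; exact hcast1 y hcc.symm
    · by_cases hx2 : x = k ∨ x = l
      · by_cases hy2 : y = k ∨ y = l
        · by_cases hy1 : y = i ∨ y = j
          · exfalso
            rw [hval1 x hx1 hx2, hval0 y hy1] at hcc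
            exact zero_ne_one hcc.symm
          · exact Or.inr ⟨hx2, hy2⟩
        · exfalso
          rw [hval1 x hx1 hx2] at hcc
          by_cases hy1 : y = i ∨ y = j
          · rw [hval0 y hy1] at hcc; exact zero_ne_one hcc.symm
          · rw [hval2 y hy1 hy2] at hcc; exact hcast2 y hcc.symm
      · exfalso
        rw [hval2 x hx1 hx2] at hcc
        by_cases hy1 : y = i ∨ y = j
        · rw [hval0 y hy1] at hcc; exact hcast1 x hcc
        · by_cases hy2 : y = k ∨ y = l
          · rw [hval1 y hy1 hy2] at hcc; exact hcast2 x hcc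
          · rw [hval2 y hy1 hy2] at hcc
            have hxy2 : (x : ℕ) + 2 = (y : ℕ) + 2 := by exact_mod_cast hcc
            exact hxy (Fin.val_injective (by omega))
  have hca : ∀ x y : Fin d, x ≠ y → c x = c y → a x ≠ a y := by
    intro x y hxy hcc
    rcases hclass x y hxy hcc with ⟨hx, hy⟩ | ⟨hx, hy⟩ <;>
      rcases hx with rfl | rfl <;> rcases hy with rfl | rfl <;>
        first
          | exact absurd rfl hxy
          | simp [hadef, hij.ne', hjk, hjl, Ne.symm hik, Ne.symm hil, hkl.ne', Ne.symm hjk, hil]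
  have haij : a i - a j = 1 := by simp [hadef, hij.ne', hjk]
  have hakl : a k - a l = 1 := by simp [hadef, Ne.symm hil, hkl.ne']
  have hcij : c i = c j := by rw [hval0 i (Or.inl rfl), hval0 j (Or.inr rfl)]
  have hckl : c k = c l := by
    rw [hval1 k (by simp [Ne.symm hik, Ne.symm hjk]) (Or.inl rfl),
      hval1 l (by simp [Ne.symm hil, Ne.symm hjl]) (Or.inr rfl)]
  have hcom := kohnoLimitCommute B H c a hca (fun m => if m = i then (1:ℂ) else 0)
      (fun m => if m = k then (1:ℂ) else 0)
  have hTi : (∑ p ∈ Finset.univ.filter (fun p : Fin d × Fin d => p.1 < p.2),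
      (if c p.1 = c p.2 then
        ((if p.1 = i then (1:ℂ) else 0) - (if p.2 = i then (1:ℂ) else 0)) / (a p.1 - a p.2)
      else 0) • B p.1 p.2) = B i j := by
    rw [Finset.sum_eq_single_of_mem (i,j) (by simp [hij])]
    · rw [if_pos hcij]
      simp only [if_pos rfl, if_neg hij.ne']
      rw [haij]
      norm_num
    · intro b hb hbne
      simp only [Finset.mem_filter, Finset.mem_univ, true_and] at hb
      by_cases hcx : c b.1 = c b.2
      · obtain ⟨h1, h2⟩ | ⟨h1, h2⟩ := hclass b.1 b.2 (ne_of_lt hb) hcx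
        · exfalso
          obtain ⟨b1, b2⟩ := b
          simp only at h1 h2 hb
          rcases h1 with rfl | rfl <;> rcases h2 with rfl | rfl
          · exact absurd hb (lt_irrefl _)
          · exact hbne rfl
          · exact absurd hb hij.asymm
          · exact absurd hb (lt_irrefl _)
        · have hb1 : b.1 ≠ i := by rcases h1 with h | h <;> rw [h]; exacts [Ne.symm hik, Ne.symm hil]
          have hb2 : b.2 ≠ i := by rcases h2 with h | h <;> rw [h]; exacts [Ne.symm hik, Ne.symm hil]
          rw [if_pos hcx, if_neg hb1, if_neg hb2]
          simp
      · rw [if_neg hcx, zero_smul]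
  have hTk : (∑ p ∈ Finset.univ.filter (fun p : Fin d × Fin d => p.1 < p.2),
      (if c p.1 = c p.2 then
        ((if p.1 = k then (1:ℂ) else 0) - (if p.2 = k then (1:ℂ) else 0)) / (a p.1 - a p.2)
      else 0) • B p.1 p.2) = B k l := by
    rw [Finset.sum_eq_single_of_mem (k,l) (by simp [hkl])]
    · rw [if_pos hckl]
      simp only [if_pos rfl, if_neg hkl.ne']
      rw [hakl]
      norm_num
    · intro b hb hbne
      simp only [Finset.mem_filter, Finset.mem_univ, true_and] at hb
      by_cases hcx : c b.1 = c b.2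
      · obtain ⟨h1, h2⟩ | ⟨h1, h2⟩ := hclass b.1 b.2 (ne_of_lt hb) hcx
        · have hb1 : b.1 ≠ k := by rcases h1 with h | h <;> rw [h]; exacts [hik, hjk]
          have hb2 : b.2 ≠ k := by rcases h2 with h | h <;> rw [h]; exacts [hik, hjk]
          rw [if_pos hcx, if_neg hb1, if_neg hb2]
          simp
        · exfalso
          obtain ⟨b1, b2⟩ := b
          simp only at h1 h2 hb
          rcases h1 with rfl | rfl <;> rcases h2 with rfl | rfl
          · exact absurd hb (lt_irrefl _)
          · exact hbne rfl
          · exact absurd hb hkl.asymm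
          · exact absurd hb (lt_irrefl _)
      · rw [if_neg hcx, zero_smul]
  rw [hTi, hTk] at hcom
  exact hcom

lemma kohnoArnold' (P Q R ua ub uc va vb vc : ℂ)
    (h1 : P ≠ 0) (h2 : Q ≠ 0) (h3 : R ≠ 0) (hrel : P = Q - R) :
    (ua - ub) / P * ((va - vc) / Q)
      + (ub - uc) / R * ((va - vb) / P)
      + (ua - uc) / Q * ((vb - vc) / R)
      - (ua - uc) / Q * ((va - vb) / P)
      - (ub - uc) / R * ((va - vc) / Q)
      - (ua - ub) / P * ((vb - vc) / R) = 0 := by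
  have hPQR : P * Q * R ≠ 0 := mul_ne_zero (mul_ne_zero h1 h2) h3
  have t1 : (ua - ub) / P * ((va - vc) / Q) = ((ua-ub)*(va-vc)*R) / (P*Q*R) := by
    rw [div_mul_div_comm, div_eq_div_iff (mul_ne_zero h1 h2) hPQR]; ring
  have t2 : (ub - uc) / R * ((va - vb) / P) = ((ub-uc)*(va-vb)*Q) / (P*Q*R) := by
    rw [div_mul_div_comm, div_eq_div_iff (mul_ne_zero h3 h1) hPQR]; ring
  have t3 : (ua - uc) / Q * ((vb - vc) / R) = ((ua-uc)*(vb-vc)*P) / (P*Q*R) := by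
    rw [div_mul_div_comm, div_eq_div_iff (mul_ne_zero h2 h3) hPQR]; ring
  have t4 : (ua - uc) / Q * ((va - vb) / P) = ((ua-uc)*(va-vb)*R) / (P*Q*R) := by
    rw [div_mul_div_comm, div_eq_div_iff (mul_ne_zero h2 h1) hPQR]; ring
  have t5 : (ub - uc) / R * ((va - vc) / Q) = ((ub-uc)*(va-vc)*P) / (P*Q*R) := by
    rw [div_mul_div_comm, div_eq_div_iff (mul_ne_zero h3 h2) hPQR]; ring
  have t6 : (ua - ub) / P * ((vb - vc) / R) = ((ua-ub)*(vb-vc)*Q) / (P*Q*R) := by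
    rw [div_mul_div_comm, div_eq_div_iff (mul_ne_zero h1 h3) hPQR]; ring
  rw [t1, t2, t3, t4, t5, t6, ← add_div, ← add_div, ← sub_div,
    ← sub_div, ← sub_div, div_eq_zero_iff]
  left
  linear_combination ((ua*vb - ub*va) + (ub*vc - uc*vb) + (uc*va - ua*vc)) * hrel

lemma kohnoArnold (wa wb wc ua ub uc va vb vc : ℂ)
    (hab : wa ≠ wb) (hac : wa ≠ wc) (hbc : wb ≠ wc) :
    (ua - ub) / (wa - wb) * ((va - vc) / (wa - wc))
      + (ub - uc) / (wb - wc) * ((va - vb) / (wa - wb))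
      + (ua - uc) / (wa - wc) * ((vb - vc) / (wb - wc))
      - (ua - uc) / (wa - wc) * ((va - vb) / (wa - wb))
      - (ub - uc) / (wb - wc) * ((va - vc) / (wa - wc))
      - (ua - ub) / (wa - wb) * ((vb - vc) / (wb - wc)) = 0 :=
  kohnoArnold' (wa - wb) (wa - wc) (wb - wc) ua ub uc va vb vc
    (sub_ne_zero.mpr hab) (sub_ne_zero.mpr hac) (sub_ne_zero.mpr hbc) (by ring)

lemma kohnoCyc {d n : ℕ} (B : Fin d → Fin d → Matrix (Fin n) (Fin n) ℂ)
    (hsym : ∀ i j : Fin d, B j i = B i j)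
    (hrel : ∀ i j k : Fin d, i < j → j < k →
        Commute (B i j) (B i k + B j k) ∧ Commute (B i j + B i k) (B j k))
    (a b c : Fin d) (hab : a ≠ b) (hac : a ≠ c) (hbc : b ≠ c) :
    B a b * B a c - B a c * B a b = B b c * B a b - B a b * B b c := by
  rcases lt_or_gt_of_ne hab with h1 | h1 <;> rcases lt_or_gt_of_ne hac with h2 | h2 <;>
    rcases lt_or_gt_of_ne hbc with h3 | h3
  · -- a<b, a<c, b<c : sorted (a,b,c)
    obtain ⟨e1, e2⟩ := hrel a b c h1 h3
    linear_combination (norm := noncomm_ring) e1.eq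
  · -- a<b, a<c, c<b : sorted (a,c,b)
    obtain ⟨e1, e2⟩ := hrel a c b h2 h3
    rw [hsym c b]
    linear_combination (norm := noncomm_ring) e2.eq - e1.eq
  · -- a<b, c<a, b<c : impossible
    exact absurd h3 (h2.trans h1).asymm
  · -- a<b, c<a, c<b : sorted (c,a,b)
    obtain ⟨e1, e2⟩ := hrel c a b h2 h1
    rw [hsym c a, hsym c b]
    linear_combination (norm := noncomm_ring) -e2.eq
  · -- b<a, a<c, b<c : sorted (b,a,c)
    obtain ⟨e1, e2⟩ := hrel b a c h1 h2
    rw [hsym b a]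
    linear_combination (norm := noncomm_ring) e1.eq
  · -- b<a, a<c, c<b : impossible
    exact absurd h1 (h2.trans h3).asymm
  · -- b<a, c<a, b<c : sorted (b,c,a)
    obtain ⟨e1, e2⟩ := hrel b c a h3 h2
    rw [hsym b a, hsym c a]
    linear_combination (norm := noncomm_ring) e2.eq - e1.eq
  · -- b<a, c<a, c<b : sorted (c,b,a)
    obtain ⟨e1, e2⟩ := hrel c b a h3 h1
    rw [hsym b a, hsym c a, hsym c b]
    linear_combination (norm := noncomm_ring) -e2.eq

lemma kohnoSixsum {d n : ℕ} (B : Fin d → Fin d → Matrix (Fin n) (Fin n) ℂ)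
    (hsym : ∀ i j : Fin d, B j i = B i j)
    (hrel : ∀ i j k : Fin d, i < j → j < k →
        Commute (B i j) (B i k + B j k) ∧ Commute (B i j + B i k) (B j k))
    (w u v : Fin d → ℂ)
    (a b c : Fin d) (hab : a ≠ b) (hac : a ≠ c) (hbc : b ≠ c)
    (hwab : w a ≠ w b) (hwac : w a ≠ w c) (hwbc : w b ≠ w c) :
    ((u a - u b) / (w a - w b) * ((v a - v c) / (w a - w c))) •
        (B a b * B a c - B a c * B a b)
      + ((u b - u c) / (w b - w c) * ((v b - v a) / (w b - w a))) •
        (B b c * B b a - B b a * B b c)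
      + ((u c - u a) / (w c - w a) * ((v c - v b) / (w c - w b))) •
        (B c a * B c b - B c b * B c a)
      + ((u a - u c) / (w a - w c) * ((v a - v b) / (w a - w b))) •
        (B a c * B a b - B a b * B a c)
      + ((u c - u b) / (w c - w b) * ((v c - v a) / (w c - w a))) •
        (B c b * B c a - B c a * B c b)
      + ((u b - u a) / (w b - w a) * ((v b - v c) / (w b - w c))) •
        (B b a * B b c - B b c * B b a) = 0 := by
  have hdivswap : ∀ (f : Fin d → ℂ) (x y : Fin d),
      (f x - f y) / (w x - w y) = (f y - f x) / (w y - w x) := by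
    intro f x y
    rw [← neg_sub (f y), ← neg_sub (w y), neg_div_neg_eq]
  rw [hdivswap u b a, hdivswap v b a, hdivswap u c a, hdivswap v c a,
    hdivswap u c b, hdivswap v c b, hsym a b, hsym a c, hsym b c]
  have h1 := kohnoCyc B hsym hrel a b c hab hac hbc
  have h2 := kohnoCyc B hsym hrel b c a hbc (Ne.symm hab) (Ne.symm hac)
  rw [hsym a b, hsym a c] at h2
  have h13 := h1.trans h2
  have e4 : B a c * B a b - B a b * B a c = -(B a b * B a c - B a c * B a b) := by noncomm_ring
  have e5 : B b c * B a c - B a c * B b c = -(B a c * B b c - B b c * B a c) := by noncomm_ring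
  have e6 : B a b * B b c - B b c * B a b = -(B b c * B a b - B a b * B b c) := by noncomm_ring
  rw [e4, e5, e6, ← h1, ← h13]
  have harn := kohnoArnold (w a) (w b) (w c) (u a) (u b) (u c) (v a) (v b) (v c) hwab hwac hwbc
  calc ((u a - u b) / (w a - w b) * ((v a - v c) / (w a - w c))) •
          (B a b * B a c - B a c * B a b)
        + ((u b - u c) / (w b - w c) * ((v a - v b) / (w a - w b))) •
          (B a b * B a c - B a c * B a b)
        + ((u a - u c) / (w a - w c) * ((v b - v c) / (w b - w c))) •
          (B a b * B a c - B a c * B a b)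
        + ((u a - u c) / (w a - w c) * ((v a - v b) / (w a - w b))) •
          -(B a b * B a c - B a c * B a b)
        + ((u b - u c) / (w b - w c) * ((v a - v c) / (w a - w c))) •
          -(B a b * B a c - B a c * B a b)
        + ((u a - u b) / (w a - w b) * ((v b - v c) / (w b - w c))) •
          -(B a b * B a c - B a c * B a b)
      = ((u a - u b) / (w a - w b) * ((v a - v c) / (w a - w c))
          + (u b - u c) / (w b - w c) * ((v a - v b) / (w a - w b))
          + (u a - u c) / (w a - w c) * ((v b - v c) / (w b - w c))
          - (u a - u c) / (w a - w c) * ((v a - v b) / (w a - w b))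
          - (u b - u c) / (w b - w c) * ((v a - v c) / (w a - w c))
          - (u a - u b) / (w a - w b) * ((v b - v c) / (w b - w c))) •
          (B a b * B a c - B a c * B a b) := by module
    _ = 0 := by rw [harn, zero_smul]

set_option maxHeartbeats 2000000 in
lemma kohnoBackward {d n : ℕ} (B : Fin d → Fin d → Matrix (Fin n) (Fin n) ℂ)
    (hsym : ∀ i j : Fin d, B j i = B i j)
    (hrel : ∀ i j k : Fin d, i < j → j < k →
        Commute (B i j) (B i k + B j k) ∧ Commute (B i j + B i k) (B j k))
    (hdisj : ∀ i j k l : Fin d, i ≠ j → i ≠ k → i ≠ l → j ≠ k → j ≠ l → k ≠ l →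
        Commute (B i j) (B k l))
    (w : Fin d → ℂ) (hw : ∀ i j : Fin d, i ≠ j → w i ≠ w j) (u v : Fin d → ℂ) :
    Commute
      (∑ p ∈ Finset.univ.filter (fun p : Fin d × Fin d => p.1 < p.2),
        (((u p.1 - u p.2) / (w p.1 - w p.2)) • B p.1 p.2))
      (∑ p ∈ Finset.univ.filter (fun p : Fin d × Fin d => p.1 < p.2),
        (((v p.1 - v p.2) / (w p.1 - w p.2)) • B p.1 p.2)) := by
  classical
  have hdivswap : ∀ (f : Fin d → ℂ) (x y : Fin d),
      (f x - f y) / (w x - w y) = (f y - f x) / (w y - w x) := by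
    intro f x y
    rw [← neg_sub (f y), ← neg_sub (w y), neg_div_neg_eq]
  set D : Finset (Fin d × Fin d) := Finset.univ.filter (fun p : Fin d × Fin d => p.1 ≠ p.2)
    with hD
  -- step 1: the doubled sum
  have hdouble : ∀ f : Fin d → ℂ,
      (∑ p ∈ D, ((f p.1 - f p.2) / (w p.1 - w p.2)) • B p.1 p.2)
      = (∑ p ∈ Finset.univ.filter (fun p : Fin d × Fin d => p.1 < p.2),
          ((f p.1 - f p.2) / (w p.1 - w p.2)) • B p.1 p.2)
        + (∑ p ∈ Finset.univ.filter (fun p : Fin d × Fin d => p.1 < p.2),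
          ((f p.1 - f p.2) / (w p.1 - w p.2)) • B p.1 p.2) := by
    intro f
    rw [← Finset.sum_filter_add_sum_filter_not D (fun p => p.1 < p.2)]
    congr 1
    · apply Finset.sum_congr
      · rw [hD, Finset.filter_filter]
        apply Finset.filter_congr
        intro x _
        constructor
        · exact fun h => h.2
        · exact fun h => ⟨ne_of_lt h, h⟩
      · intros; rfl
    · apply Finset.sum_nbij' (i := fun p : Fin d × Fin d => (p.2, p.1))
        (j := fun p : Fin d × Fin d => (p.2, p.1))
      · intro a ha
        simp only [hD, Finset.mem_filter, Finset.mem_univ, true_and] at ha ⊢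
        exact lt_of_le_of_ne (not_lt.mp ha.2) (Ne.symm ha.1)
      · intro a ha
        simp only [hD, Finset.mem_filter, Finset.mem_univ, true_and] at ha ⊢
        exact ⟨(ne_of_lt ha).symm, not_lt.mpr (le_of_lt ha)⟩
      · intro a _; rfl
      · intro a _; rfl
      · intro a _
        simp only
        rw [hdivswap f a.2 a.1, hsym a.2 a.1]
  -- the pair-commutator summand over D ×ˢ D
  set F : (Fin d × Fin d) × (Fin d × Fin d) → Matrix (Fin n) (Fin n) ℂ :=
    fun x => (((u x.1.1 - u x.1.2) / (w x.1.1 - w x.1.2)) *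
        ((v x.2.1 - v x.2.2) / (w x.2.1 - w x.2.2))) •
      (B x.1.1 x.1.2 * B x.2.1 x.2.2 - B x.2.1 x.2.2 * B x.1.1 x.1.2) with hF
  have hexp :
      (∑ p ∈ D, ((u p.1 - u p.2) / (w p.1 - w p.2)) • B p.1 p.2)
        * (∑ p ∈ D, ((v p.1 - v p.2) / (w p.1 - w p.2)) • B p.1 p.2)
      - (∑ p ∈ D, ((v p.1 - v p.2) / (w p.1 - w p.2)) • B p.1 p.2)
        * (∑ p ∈ D, ((u p.1 - u p.2) / (w p.1 - w p.2)) • B p.1 p.2)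
      = ∑ x ∈ D ×ˢ D, F x := by
    rw [Finset.sum_mul_sum, Finset.sum_mul_sum, Finset.sum_product]
    rw [Finset.sum_comm (s := D) (t := D)
      (f := fun p q => (((v p.1 - v p.2) / (w p.1 - w p.2)) • B p.1 p.2) *
        (((u q.1 - u q.2) / (w q.1 - w q.2)) • B q.1 q.2))]
    rw [← Finset.sum_sub_distrib]
    apply Finset.sum_congr rfl
    intro p _
    rw [← Finset.sum_sub_distrib]
    apply Finset.sum_congr rfl
    intro q _
    rw [hF]
    simp only
    rw [smul_mul_smul_comm, smul_mul_smul_comm,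
      mul_comm ((v q.1 - v q.2) / (w q.1 - w q.2)) ((u p.1 - u p.2) / (w p.1 - w p.2)),
      ← smul_sub]
  -- triples
  set T : Finset (Fin d × Fin d × Fin d) := Finset.univ.filter
    (fun t : Fin d × Fin d × Fin d => t.1 ≠ t.2.1 ∧ t.1 ≠ t.2.2 ∧ t.2.1 ≠ t.2.2) with hT
  set Fc : Fin d × Fin d × Fin d → Matrix (Fin n) (Fin n) ℂ := fun t =>
    (((u t.1 - u t.2.1) / (w t.1 - w t.2.1)) * ((v t.1 - v t.2.2) / (w t.1 - w t.2.2))) •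
      (B t.1 t.2.1 * B t.1 t.2.2 - B t.1 t.2.2 * B t.1 t.2.1) with hFc
  have hmemD : ∀ x : (Fin d × Fin d) × (Fin d × Fin d),
      x ∈ D ×ˢ D ↔ (x.1.1 ≠ x.1.2 ∧ x.2.1 ≠ x.2.2) := by
    intro x
    simp [hD, Finset.mem_product]
  have hmemT : ∀ t : Fin d × Fin d × Fin d,
      t ∈ T ↔ (t.1 ≠ t.2.1 ∧ t.1 ≠ t.2.2 ∧ t.2.1 ≠ t.2.2) := by
    intro t
    simp [hT]
  -- split
  have e0 := (Finset.sum_filter_add_sum_filter_not (D ×ˢ D)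
    (fun x => x.1.1 = x.2.1 ∧ x.1.2 ≠ x.2.2) F).symm
  have e1 := (Finset.sum_filter_add_sum_filter_not
    ((D ×ˢ D).filter (fun x => ¬(x.1.1 = x.2.1 ∧ x.1.2 ≠ x.2.2)))
    (fun x => x.1.1 = x.2.2 ∧ x.1.2 ≠ x.2.1) F).symm
  have e2 := (Finset.sum_filter_add_sum_filter_not
    (((D ×ˢ D).filter (fun x => ¬(x.1.1 = x.2.1 ∧ x.1.2 ≠ x.2.2))).filter
      (fun x => ¬(x.1.1 = x.2.2 ∧ x.1.2 ≠ x.2.1)))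
    (fun x => x.1.2 = x.2.1 ∧ x.1.1 ≠ x.2.2) F).symm
  have e3 := (Finset.sum_filter_add_sum_filter_not
    ((((D ×ˢ D).filter (fun x => ¬(x.1.1 = x.2.1 ∧ x.1.2 ≠ x.2.2))).filter
      (fun x => ¬(x.1.1 = x.2.2 ∧ x.1.2 ≠ x.2.1))).filter
      (fun x => ¬(x.1.2 = x.2.1 ∧ x.1.1 ≠ x.2.2)))
    (fun x => x.1.2 = x.2.2 ∧ x.1.1 ≠ x.2.1) F).symm
  -- collapse the nested filters
  have hfc2 : ((D ×ˢ D).filter (fun x => ¬(x.1.1 = x.2.1 ∧ x.1.2 ≠ x.2.2))).filter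
      (fun x => x.1.1 = x.2.2 ∧ x.1.2 ≠ x.2.1)
      = (D ×ˢ D).filter (fun x => x.1.1 = x.2.2 ∧ x.1.2 ≠ x.2.1) := by
    rw [Finset.filter_filter]
    apply Finset.filter_congr
    intro x hx
    rw [hmemD] at hx
    constructor
    · tauto
    · intro h
      have n1 : ¬(x.1.1 = x.2.1 ∧ x.1.2 ≠ x.2.2) := fun hc => hx.2 (hc.1.symm.trans h.1)
      tauto
  have hfc3 : (((D ×ˢ D).filter (fun x => ¬(x.1.1 = x.2.1 ∧ x.1.2 ≠ x.2.2))).filter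
      (fun x => ¬(x.1.1 = x.2.2 ∧ x.1.2 ≠ x.2.1))).filter
      (fun x => x.1.2 = x.2.1 ∧ x.1.1 ≠ x.2.2)
      = (D ×ˢ D).filter (fun x => x.1.2 = x.2.1 ∧ x.1.1 ≠ x.2.2) := by
    rw [Finset.filter_filter, Finset.filter_filter]
    apply Finset.filter_congr
    intro x hx
    rw [hmemD] at hx
    constructor
    · tauto
    · intro h
      have n1 : ¬(x.1.1 = x.2.1 ∧ x.1.2 ≠ x.2.2) := fun hc => hx.1 (hc.1.trans h.1.symm)
      have n2 : ¬(x.1.1 = x.2.2 ∧ x.1.2 ≠ x.2.1) := fun hc => h.2 hc.1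
      tauto
  have hfc4 : ((((D ×ˢ D).filter (fun x => ¬(x.1.1 = x.2.1 ∧ x.1.2 ≠ x.2.2))).filter
      (fun x => ¬(x.1.1 = x.2.2 ∧ x.1.2 ≠ x.2.1))).filter
      (fun x => ¬(x.1.2 = x.2.1 ∧ x.1.1 ≠ x.2.2))).filter
      (fun x => x.1.2 = x.2.2 ∧ x.1.1 ≠ x.2.1)
      = (D ×ˢ D).filter (fun x => x.1.2 = x.2.2 ∧ x.1.1 ≠ x.2.1) := by
    rw [Finset.filter_filter, Finset.filter_filter, Finset.filter_filter]
    apply Finset.filter_congr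
    intro x hx
    rw [hmemD] at hx
    constructor
    · tauto
    · intro h
      have n1 : ¬(x.1.1 = x.2.1 ∧ x.1.2 ≠ x.2.2) := fun hc => hc.2 h.1
      have n2 : ¬(x.1.1 = x.2.2 ∧ x.1.2 ≠ x.2.1) := fun hc => hx.1 (hc.1.trans h.1.symm)
      have n3 : ¬(x.1.2 = x.2.1 ∧ x.1.1 ≠ x.2.2) := fun hc => hx.2 (hc.1.symm.trans h.1)
      tauto
  -- the remainder is zero
  have hR4zero : ∑ x ∈ ((((D ×ˢ D).filter (fun x => ¬(x.1.1 = x.2.1 ∧ x.1.2 ≠ x.2.2))).filter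
      (fun x => ¬(x.1.1 = x.2.2 ∧ x.1.2 ≠ x.2.1))).filter
      (fun x => ¬(x.1.2 = x.2.1 ∧ x.1.1 ≠ x.2.2))).filter
      (fun x => ¬(x.1.2 = x.2.2 ∧ x.1.1 ≠ x.2.1)), F x = 0 := by
    apply Finset.sum_eq_zero
    intro x hx
    simp only [Finset.mem_filter] at hx
    obtain ⟨⟨⟨⟨hx0, hn1⟩, hn2⟩, hn3⟩, hn4⟩ := hx
    rw [hmemD] at hx0
    obtain ⟨⟨a1, a2⟩, b1, b2⟩ := x
    simp only at hx0 hn1 hn2 hn3 hn4 ⊢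
    obtain ⟨ha, hb⟩ := hx0
    by_cases h1 : a1 = b1
    · have h12 : a2 = b2 := by
        by_contra hne
        exact hn1 ⟨h1, hne⟩
      subst h1; subst h12
      simp [hF]
    · by_cases h2 : a1 = b2
      · have h21 : a2 = b1 := by
          by_contra hne
          exact hn2 ⟨h2, hne⟩
        subst h2; subst h21
        simp only [hF]
        rw [hsym a2 a1]
        simp
      · by_cases h3 : a2 = b1
        · have : a1 = b2 := by
            by_contra hne
            exact hn3 ⟨h3, hne⟩
          exact absurd this h2
        · by_cases h4 : a2 = b2
          · have : a1 = b1 := by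
              by_contra hne
              exact hn4 ⟨h4, hne⟩
            exact absurd this h1
          · have hc := hdisj a1 a2 b1 b2 ha h1 h2 h3 h4 hb
            simp only [hF]
            rw [sub_eq_zero_of_eq hc.eq, smul_zero]
  -- the four bijections onto the triple sum
  have hb1 : ∑ x ∈ (D ×ˢ D).filter (fun x => x.1.1 = x.2.1 ∧ x.1.2 ≠ x.2.2), F x
      = ∑ t ∈ T, Fc t := by
    apply Finset.sum_nbij' (i := fun x : (Fin d × Fin d) × (Fin d × Fin d) =>
        (x.1.1, x.1.2, x.2.2))
      (j := fun t : Fin d × Fin d × Fin d => ((t.1, t.2.1), (t.1, t.2.2)))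
    · intro a ha
      simp only [Finset.mem_filter] at ha
      obtain ⟨haD, hc⟩ := ha
      rw [hmemD] at haD
      rw [hmemT]
      exact ⟨haD.1, hc.1.trans_ne haD.2, hc.2⟩
    · intro t ht
      rw [hmemT] at ht
      simp only [Finset.mem_filter]
      rw [hmemD]
      exact ⟨⟨ht.1, ht.2.1⟩, by simp, ht.2.2⟩
    · intro a ha
      simp only [Finset.mem_filter] at ha
      obtain ⟨⟨a1, a2⟩, b1, b2⟩ := a
      obtain ⟨-, hc⟩ := ha
      simp only at hc ⊢
      rw [hc.1]
    · intro t _; rfl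
    · intro a ha
      simp only [Finset.mem_filter] at ha
      obtain ⟨⟨a1, a2⟩, b1, b2⟩ := a
      obtain ⟨-, hc⟩ := ha
      simp only at hc
      obtain ⟨rfl, -⟩ := hc
      rfl
  have hb2 : ∑ x ∈ (D ×ˢ D).filter (fun x => x.1.1 = x.2.2 ∧ x.1.2 ≠ x.2.1), F x
      = ∑ t ∈ T, Fc t := by
    apply Finset.sum_nbij' (i := fun x : (Fin d × Fin d) × (Fin d × Fin d) =>
        (x.1.1, x.1.2, x.2.1))
      (j := fun t : Fin d × Fin d × Fin d => ((t.1, t.2.1), (t.2.2, t.1)))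
    · intro a ha
      simp only [Finset.mem_filter] at ha
      obtain ⟨haD, hc⟩ := ha
      rw [hmemD] at haD
      rw [hmemT]
      exact ⟨haD.1, fun h => haD.2 (h.symm.trans hc.1), hc.2⟩
    · intro t ht
      rw [hmemT] at ht
      simp only [Finset.mem_filter]
      rw [hmemD]
      exact ⟨⟨ht.1, Ne.symm ht.2.1⟩, by simp, ht.2.2⟩
    · intro a ha
      simp only [Finset.mem_filter] at ha
      obtain ⟨⟨a1, a2⟩, b1, b2⟩ := a
      obtain ⟨-, hc⟩ := ha
      simp only at hc ⊢
      rw [hc.1]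
    · intro t _; rfl
    · intro a ha
      simp only [Finset.mem_filter] at ha
      obtain ⟨⟨a1, a2⟩, b1, b2⟩ := a
      obtain ⟨-, hc⟩ := ha
      simp only at hc
      obtain ⟨heq, -⟩ := hc
      subst heq
      simp only [hF, hFc]
      rw [hdivswap v b1 a1, hsym a1 b1]
  have hb3 : ∑ x ∈ (D ×ˢ D).filter (fun x => x.1.2 = x.2.1 ∧ x.1.1 ≠ x.2.2), F x
      = ∑ t ∈ T, Fc t := by
    apply Finset.sum_nbij' (i := fun x : (Fin d × Fin d) × (Fin d × Fin d) =>
        (x.1.2, x.1.1, x.2.2))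
      (j := fun t : Fin d × Fin d × Fin d => ((t.2.1, t.1), (t.1, t.2.2)))
    · intro a ha
      simp only [Finset.mem_filter] at ha
      obtain ⟨haD, hc⟩ := ha
      rw [hmemD] at haD
      rw [hmemT]
      exact ⟨Ne.symm haD.1, hc.1.trans_ne haD.2, hc.2⟩
    · intro t ht
      rw [hmemT] at ht
      simp only [Finset.mem_filter]
      rw [hmemD]
      exact ⟨⟨Ne.symm ht.1, ht.2.1⟩, by simp, ht.2.2⟩
    · intro a ha
      simp only [Finset.mem_filter] at ha
      obtain ⟨⟨a1, a2⟩, b1, b2⟩ := a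
      obtain ⟨-, hc⟩ := ha
      simp only at hc ⊢
      rw [hc.1]
    · intro t _; rfl
    · intro a ha
      simp only [Finset.mem_filter] at ha
      obtain ⟨⟨a1, a2⟩, b1, b2⟩ := a
      obtain ⟨-, hc⟩ := ha
      simp only at hc
      obtain ⟨heq, -⟩ := hc
      subst heq
      simp only [hF, hFc]
      rw [hdivswap u a2 a1, hsym a2 a1]
  have hb4 : ∑ x ∈ (D ×ˢ D).filter (fun x => x.1.2 = x.2.2 ∧ x.1.1 ≠ x.2.1), F x
      = ∑ t ∈ T, Fc t := by
    apply Finset.sum_nbij' (i := fun x : (Fin d × Fin d) × (Fin d × Fin d) =>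
        (x.1.2, x.1.1, x.2.1))
      (j := fun t : Fin d × Fin d × Fin d => ((t.2.1, t.1), (t.2.2, t.1)))
    · intro a ha
      simp only [Finset.mem_filter] at ha
      obtain ⟨haD, hc⟩ := ha
      rw [hmemD] at haD
      rw [hmemT]
      exact ⟨Ne.symm haD.1, fun h => haD.2 (h.symm.trans hc.1), hc.2⟩
    · intro t ht
      rw [hmemT] at ht
      simp only [Finset.mem_filter]
      rw [hmemD]
      exact ⟨⟨Ne.symm ht.1, Ne.symm ht.2.1⟩, by simp, ht.2.2⟩
    · intro a ha
      simp only [Finset.mem_filter] at ha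
      obtain ⟨⟨a1, a2⟩, b1, b2⟩ := a
      obtain ⟨-, hc⟩ := ha
      simp only at hc ⊢
      rw [hc.1]
    · intro t _; rfl
    · intro a ha
      simp only [Finset.mem_filter] at ha
      obtain ⟨⟨a1, a2⟩, b1, b2⟩ := a
      obtain ⟨-, hc⟩ := ha
      simp only at hc
      obtain ⟨heq, -⟩ := hc
      subst heq
      simp only [hF, hFc]
      rw [hdivswap u a2 a1, hdivswap v a2 b1, hsym a1 a2, hsym b1 a2]
  -- permutation identities on the triple sum
  have hp1 : ∑ t ∈ T, Fc (t.2.1, t.2.2, t.1) = ∑ t ∈ T, Fc t := by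
    apply Finset.sum_nbij' (i := fun t : Fin d × Fin d × Fin d => (t.2.1, t.2.2, t.1))
      (j := fun t : Fin d × Fin d × Fin d => (t.2.2, t.1, t.2.1))
    · intro t ht; rw [hmemT] at ht ⊢; exact ⟨ht.2.2, Ne.symm ht.1, Ne.symm ht.2.1⟩
    · intro t ht; rw [hmemT] at ht ⊢; exact ⟨Ne.symm ht.2.1, Ne.symm ht.2.2, ht.1⟩
    · intro t _; rfl
    · intro t _; rfl
    · intro t _; rfl
  have hp2 : ∑ t ∈ T, Fc (t.2.2, t.1, t.2.1) = ∑ t ∈ T, Fc t := by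
    apply Finset.sum_nbij' (i := fun t : Fin d × Fin d × Fin d => (t.2.2, t.1, t.2.1))
      (j := fun t : Fin d × Fin d × Fin d => (t.2.1, t.2.2, t.1))
    · intro t ht; rw [hmemT] at ht ⊢; exact ⟨Ne.symm ht.2.1, Ne.symm ht.2.2, ht.1⟩
    · intro t ht; rw [hmemT] at ht ⊢; exact ⟨ht.2.2, Ne.symm ht.1, Ne.symm ht.2.1⟩
    · intro t _; rfl
    · intro t _; rfl
    · intro t _; rfl
  have hp3 : ∑ t ∈ T, Fc (t.1, t.2.2, t.2.1) = ∑ t ∈ T, Fc t := by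
    apply Finset.sum_nbij' (i := fun t : Fin d × Fin d × Fin d => (t.1, t.2.2, t.2.1))
      (j := fun t : Fin d × Fin d × Fin d => (t.1, t.2.2, t.2.1))
    · intro t ht; rw [hmemT] at ht ⊢; exact ⟨ht.2.1, ht.1, Ne.symm ht.2.2⟩
    · intro t ht; rw [hmemT] at ht ⊢; exact ⟨ht.2.1, ht.1, Ne.symm ht.2.2⟩
    · intro t _; rfl
    · intro t _; rfl
    · intro t _; rfl
  have hp4 : ∑ t ∈ T, Fc (t.2.2, t.2.1, t.1) = ∑ t ∈ T, Fc t := by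
    apply Finset.sum_nbij' (i := fun t : Fin d × Fin d × Fin d => (t.2.2, t.2.1, t.1))
      (j := fun t : Fin d × Fin d × Fin d => (t.2.2, t.2.1, t.1))
    · intro t ht; rw [hmemT] at ht ⊢; exact ⟨Ne.symm ht.2.2, Ne.symm ht.2.1, Ne.symm ht.1⟩
    · intro t ht; rw [hmemT] at ht ⊢; exact ⟨Ne.symm ht.2.2, Ne.symm ht.2.1, Ne.symm ht.1⟩
    · intro t _; rfl
    · intro t _; rfl
    · intro t _; rfl
  have hp5 : ∑ t ∈ T, Fc (t.2.1, t.1, t.2.2) = ∑ t ∈ T, Fc t := by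
    apply Finset.sum_nbij' (i := fun t : Fin d × Fin d × Fin d => (t.2.1, t.1, t.2.2))
      (j := fun t : Fin d × Fin d × Fin d => (t.2.1, t.1, t.2.2))
    · intro t ht; rw [hmemT] at ht ⊢; exact ⟨Ne.symm ht.1, ht.2.2, ht.2.1⟩
    · intro t ht; rw [hmemT] at ht ⊢; exact ⟨Ne.symm ht.1, ht.2.2, ht.2.1⟩
    · intro t _; rfl
    · intro t _; rfl
    · intro t _; rfl
  -- six-term cancellation
  have h6 : ∑ t ∈ T, (Fc t + Fc (t.2.1, t.2.2, t.1) + Fc (t.2.2, t.1, t.2.1)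
      + Fc (t.1, t.2.2, t.2.1) + Fc (t.2.2, t.2.1, t.1) + Fc (t.2.1, t.1, t.2.2)) = 0 := by
    apply Finset.sum_eq_zero
    intro t ht
    rw [hmemT] at ht
    obtain ⟨a, b, c⟩ := t
    obtain ⟨h1, h2, h3⟩ := ht
    simp only [hFc]
    exact kohnoSixsum B hsym hrel w u v a b c h1 h2 h3 (hw _ _ h1) (hw _ _ h2) (hw _ _ h3)
  simp only [Finset.sum_add_distrib] at h6
  rw [hp1, hp2, hp3, hp4, hp5] at h6
  have hQ : ∑ t ∈ T, Fc t = 0 := by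
    have h6' : (6:ℂ) • (∑ t ∈ T, Fc t) = 0 := by
      rw [show (6:ℂ) • (∑ t ∈ T, Fc t) = ∑ t ∈ T, Fc t + ∑ t ∈ T, Fc t + ∑ t ∈ T, Fc t
          + ∑ t ∈ T, Fc t + ∑ t ∈ T, Fc t + ∑ t ∈ T, Fc t from by module]
      exact h6
    exact (smul_eq_zero.mp h6').resolve_left (by norm_num)
  -- total sum vanishes
  have htot : ∑ x ∈ D ×ˢ D, F x = 0 := by
    rw [e0, e1, e2, e3, hfc2, hfc3, hfc4, hR4zero, hb1, hb2, hb3, hb4, hQ]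
    simp
  -- conclude
  have hcomm' := sub_eq_zero.mp (hexp.trans htot)
  rw [hdouble u, hdouble v] at hcomm'
  show _ = _
  have key : (4:ℂ) • ((∑ p ∈ Finset.univ.filter (fun p : Fin d × Fin d => p.1 < p.2),
        (((u p.1 - u p.2) / (w p.1 - w p.2)) • B p.1 p.2))
      * (∑ p ∈ Finset.univ.filter (fun p : Fin d × Fin d => p.1 < p.2),
        (((v p.1 - v p.2) / (w p.1 - w p.2)) • B p.1 p.2))
      - (∑ p ∈ Finset.univ.filter (fun p : Fin d × Fin d => p.1 < p.2),
        (((v p.1 - v p.2) / (w p.1 - w p.2)) • B p.1 p.2))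
      * (∑ p ∈ Finset.univ.filter (fun p : Fin d × Fin d => p.1 < p.2),
        (((u p.1 - u p.2) / (w p.1 - w p.2)) • B p.1 p.2))) = 0 := by
    linear_combination (norm := (noncomm_ring; match_scalars <;> norm_num)) hcomm'
  exact sub_eq_zero.mp ((smul_eq_zero.mp key).resolve_left (by norm_num))




/-- **Flatness of the Kohno connection ⟺ infinitesimal pure braid relations.**
Let `d ≥ 2`, `n ≥ 1`, and `(B i j)` a symmetric family of `n × n` complex matrices.
For `w` in the configuration space and `u : ℂ^d` set
`A_w(u) = ∑_{i<j} ((u i - u j)/(w i - w j)) • B i j`.  The Kohno connection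
`d + ∑_{i<j} B i j d(w i - w j)/(w i - w j)` is flat — equivalently, `A_w(u)` and `A_w(v)`
commute for all `w` in configuration space and all `u v` — iff the family `(B i j)`
satisfies the infinitesimal pure braid relations. -/
theorem kohno_connection_flat_iff_infinitesimal_pure_braid
    (d n : ℕ) (hd : 2 ≤ d) (hn : 1 ≤ n)
    (B : Fin d → Fin d → Matrix (Fin n) (Fin n) ℂ)
    (hsym : ∀ i j : Fin d, B j i = B i j) :
    (∀ w : Fin d → ℂ, (∀ i j : Fin d, i ≠ j → w i ≠ w j) →
      ∀ u v : Fin d → ℂ,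
        Commute
          (∑ p ∈ Finset.univ.filter (fun p : Fin d × Fin d => p.1 < p.2),
            (((u p.1 - u p.2) / (w p.1 - w p.2)) • B p.1 p.2))
          (∑ p ∈ Finset.univ.filter (fun p : Fin d × Fin d => p.1 < p.2),
            (((v p.1 - v p.2) / (w p.1 - w p.2)) • B p.1 p.2)))
    ↔
    ((∀ i j k : Fin d, i < j → j < k →
        Commute (B i j) (B i k + B j k) ∧ Commute (B i j + B i k) (B j k)) ∧
      (∀ i j k l : Fin d, i ≠ j → i ≠ k → i ≠ l → j ≠ k → j ≠ l → k ≠ l →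
        Commute (B i j) (B k l))) := by
  constructor
  · intro H
    refine ⟨fun i j k hij hjk => kohnoFwdTriple B H i j k hij hjk, ?_⟩
    intro i j k l hij hik hil hjk hjl hkl
    rcases lt_or_gt_of_ne hij with h1 | h1 <;> rcases lt_or_gt_of_ne hkl with h2 | h2
    · exact kohnoFwdDisj B H i j k l h1 h2 hik hil hjk hjl
    · rw [hsym l k]
      exact kohnoFwdDisj B H i j l k h1 h2 hil hik hjl hjk
    · rw [hsym j i]
      exact kohnoFwdDisj B H j i k l h1 h2 hjk hjl hik hil
    · rw [hsym j i, hsym l k]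
      exact kohnoFwdDisj B H j i l k h1 h2 hjl hjk hil hik
  · rintro ⟨hrel, hdisj⟩ w hw u v
    exact kohnoBackward B hsym hrel hdisj w hw u v
end

section
/- The only symmetric flat deformation of the Knizhnik–Zamolodchikov form by a diagonal term is trivial: let d ≥ 3 and λ, μ ∈ ℂ, and on H = (ℂ²)^{⊗d} set B_{ij} = λ Ω_{ij} + μ s₃^{(i)} ∘ s₃^{(j)} for 1 ≤ i < j ≤ d. Then the family (B_{ij}) satisfies the infinitesimal pure braid relations if and only if λμ = 0. -/
/-- The Pauli matrices `σ₁, σ₂, σ₃`. -/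
noncomputable def pauli : Fin 3 → Matrix (Fin 2) (Fin 2) ℂ
  | 0 => !![0, 1; 1, 0]
  | 1 => !![0, -Complex.I; Complex.I, 0]
  | 2 => !![1, 0; 0, -1]

/-- The spin operator `s_ℓ^{(a)}` on `H = (ℂ²)^{⊗d}` (realized concretely as the space of
functions `(Fin d → Fin 2) → ℂ`, with operators written as matrices): it acts as `(1/2)σ_ℓ`
on the `a`-th tensor factor and as the identity on all other factors. -/
noncomputable def spinOp (d : ℕ) (ℓ : Fin 3) (a : Fin d) :
    Matrix (Fin d → Fin 2) (Fin d → Fin 2) ℂ :=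
  Matrix.of fun x y =>
    (1 / 2 : ℂ) * pauli ℓ (x a) (y a) *
      ∏ b ∈ Finset.univ.erase a, (if x b = y b then 1 else 0)

/-- The Knizhnik–Zamolodchikov coefficient operator `Ω_{ij} = ∑_ℓ s_ℓ^{(i)} ∘ s_ℓ^{(j)}`. -/
noncomputable def omegaOp (d : ℕ) (i j : Fin d) :
    Matrix (Fin d → Fin 2) (Fin d → Fin 2) ℂ :=
  ∑ ℓ : Fin 3, spinOp d ℓ i * spinOp d ℓ j

/-- The total spin operator `L_ℓ = ∑_a s_ℓ^{(a)}`. -/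
noncomputable def totalSpin (d : ℕ) (ℓ : Fin 3) :
    Matrix (Fin d → Fin 2) (Fin d → Fin 2) ℂ :=
  ∑ a : Fin d, spinOp d ℓ a

/-- The total spin Casimir `L² = L₁² + L₂² + L₃²`. -/
noncomputable def totalSpinSq (d : ℕ) :
    Matrix (Fin d → Fin 2) (Fin d → Fin 2) ℂ :=
  ∑ ℓ : Fin 3, totalSpin d ℓ * totalSpin d ℓ

namespace KZAux

noncomputable def Eop (d : ℕ) (S : Fin d → Matrix (Fin 2) (Fin 2) ℂ) :
    Matrix (Fin d → Fin 2) (Fin d → Fin 2) ℂ :=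
  Matrix.of fun x y => ∏ a, S a (x a) (y a)

lemma Eop_mul (d : ℕ) (S T : Fin d → Matrix (Fin 2) (Fin 2) ℂ) :
    Eop d S * Eop d T = Eop d (fun a => S a * T a) := by
  ext x y
  simp only [Eop, Matrix.mul_apply, Matrix.of_apply, ← Finset.prod_mul_distrib]
  rw [Finset.prod_univ_sum (fun _ => (Finset.univ : Finset (Fin 2)))
    (fun a t => S a (x a) t * T a t (y a))]
  rw [show (Finset.univ : Finset (Fin d → Fin 2)) = Fintype.piFinset (fun _ => Finset.univ) by
    simp [Fintype.piFinset_univ]]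

noncomputable def P (ℓ : Fin 3) : Matrix (Fin 2) (Fin 2) ℂ := (1 / 2 : ℂ) • pauli ℓ

lemma spinOp_eq (d : ℕ) (ℓ : Fin 3) (a : Fin d) :
    spinOp d ℓ a = Eop d (Function.update (fun _ => 1) a (P ℓ)) := by
  ext x y
  simp only [spinOp, Eop, Matrix.of_apply]
  rw [← Finset.mul_prod_erase Finset.univ _ (Finset.mem_univ a), Function.update_self]
  rw [show (P ℓ) (x a) (y a) = (1 / 2 : ℂ) * pauli ℓ (x a) (y a) by
    simp [P, Matrix.smul_apply]]
  congr 1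
  refine Finset.prod_congr rfl fun b hb => ?_
  rw [Function.update_of_ne (Finset.ne_of_mem_erase hb)]
  simp [Matrix.one_apply]

variable {d : ℕ}

noncomputable def U3 (d : ℕ) (i j k : Fin d) (A B C : Matrix (Fin 2) (Fin 2) ℂ) :
    Fin d → Matrix (Fin 2) (Fin 2) ℂ :=
  Function.update (Function.update (Function.update (fun _ => 1) i A) j B) k C

lemma U3_k {i j k : Fin d} (A B C : Matrix (Fin 2) (Fin 2) ℂ) :
    U3 d i j k A B C k = C := Function.update_self _ _ _

lemma U3_j {i j k : Fin d} (hjk : j ≠ k) (A B C : Matrix (Fin 2) (Fin 2) ℂ) :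
    U3 d i j k A B C j = B := by
  rw [U3, Function.update_of_ne hjk, Function.update_self]

lemma U3_i {i j k : Fin d} (hij : i ≠ j) (hik : i ≠ k) (A B C : Matrix (Fin 2) (Fin 2) ℂ) :
    U3 d i j k A B C i = A := by
  rw [U3, Function.update_of_ne hik, Function.update_of_ne hij, Function.update_self]

lemma U3_other {i j k a : Fin d} (hi : a ≠ i) (hj : a ≠ j) (hk : a ≠ k)
    (A B C : Matrix (Fin 2) (Fin 2) ℂ) :
    U3 d i j k A B C a = 1 := by
  rw [U3, Function.update_of_ne hk, Function.update_of_ne hj, Function.update_of_ne hi]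

lemma U3_mul {i j k : Fin d} (hij : i ≠ j) (hik : i ≠ k) (hjk : j ≠ k)
    (A B C A' B' C' : Matrix (Fin 2) (Fin 2) ℂ) :
    (fun a => U3 d i j k A B C a * U3 d i j k A' B' C' a)
      = U3 d i j k (A * A') (B * B') (C * C') := by
  funext a
  by_cases hk : a = k
  · subst hk; simp only [U3_k]
  by_cases hj : a = j
  · subst hj; simp only [U3_j hjk]
  by_cases hi : a = i
  · subst hi; simp only [U3_i hij hik]
  · simp only [U3_other hi hj hk, one_mul]

lemma EU3_mul {i j k : Fin d} (hij : i ≠ j) (hik : i ≠ k) (hjk : j ≠ k)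
    (A B C A' B' C' : Matrix (Fin 2) (Fin 2) ℂ) :
    Eop d (U3 d i j k A B C) * Eop d (U3 d i j k A' B' C')
      = Eop d (U3 d i j k (A * A') (B * B') (C * C')) := by
  rw [Eop_mul, U3_mul hij hik hjk]

noncomputable def tail (d : ℕ) (i j k : Fin d) (x y : Fin d → Fin 2) : ℂ :=
  ∏ a ∈ ((Finset.univ.erase i).erase j).erase k, if x a = y a then 1 else 0

lemma EU3_apply {i j k : Fin d} (hij : i ≠ j) (hik : i ≠ k) (hjk : j ≠ k)
    (A B C : Matrix (Fin 2) (Fin 2) ℂ) (x y : Fin d → Fin 2) :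
    Eop d (U3 d i j k A B C) x y
      = A (x i) (y i) * B (x j) (y j) * C (x k) (y k) * tail d i j k x y := by
  simp only [Eop, Matrix.of_apply]
  rw [← Finset.mul_prod_erase Finset.univ _ (Finset.mem_univ i)]
  rw [← Finset.mul_prod_erase _ _
    (Finset.mem_erase.2 ⟨hij.symm, Finset.mem_univ j⟩)]
  rw [← Finset.mul_prod_erase _ _
    (Finset.mem_erase.2 ⟨hjk.symm, Finset.mem_erase.2 ⟨hik.symm, Finset.mem_univ k⟩⟩)]
  rw [U3_i hij hik, U3_j hjk, U3_k]
  have ht : ∏ a ∈ ((Finset.univ.erase i).erase j).erase k, U3 d i j k A B C a (x a) (y a)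
      = tail d i j k x y := by
    refine Finset.prod_congr rfl fun a ha => ?_
    obtain ⟨hak, haj, hai, -⟩ :
        a ≠ k ∧ a ≠ j ∧ a ≠ i ∧ a ∈ Finset.univ := by
      simpa [Finset.mem_erase, and_assoc] using ha
    rw [U3_other hai haj hak, Matrix.one_apply]
  rw [ht]; ring

lemma spin_U3_ij {i j k : Fin d} (hij : i ≠ j) (hik : i ≠ k) (hjk : j ≠ k) (ℓ m : Fin 3) :
    spinOp d ℓ i * spinOp d m j = Eop d (U3 d i j k (P ℓ) (P m) 1) := by
  rw [spinOp_eq, spinOp_eq, Eop_mul]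
  refine congrArg (Eop d) (funext fun a => ?_)
  by_cases hk : a = k
  · subst hk
    rw [Function.update_of_ne (Ne.symm hik), Function.update_of_ne (Ne.symm hjk), U3_k, one_mul]
  by_cases hj : a = j
  · subst hj
    rw [Function.update_of_ne (Ne.symm hij), Function.update_self, U3_j hjk, one_mul]
  by_cases hi : a = i
  · subst hi
    rw [Function.update_self, Function.update_of_ne hij, U3_i hij hik, mul_one]
  · rw [Function.update_of_ne hi, Function.update_of_ne hj, U3_other hi hj hk, one_mul]

lemma spin_U3_ik {i j k : Fin d} (hij : i ≠ j) (hik : i ≠ k) (hjk : j ≠ k) (ℓ m : Fin 3) :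
    spinOp d ℓ i * spinOp d m k = Eop d (U3 d i j k (P ℓ) 1 (P m)) := by
  rw [spinOp_eq, spinOp_eq, Eop_mul]
  refine congrArg (Eop d) (funext fun a => ?_)
  by_cases hk : a = k
  · subst hk
    rw [Function.update_of_ne (Ne.symm hik), Function.update_self, U3_k, one_mul]
  by_cases hj : a = j
  · subst hj
    rw [Function.update_of_ne (Ne.symm hij), Function.update_of_ne hjk, U3_j hjk, one_mul]
  by_cases hi : a = i
  · subst hi
    rw [Function.update_self, Function.update_of_ne hik, U3_i hij hik, mul_one]
  · rw [Function.update_of_ne hi, Function.update_of_ne hk, U3_other hi hj hk, one_mul]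

lemma spin_U3_jk {i j k : Fin d} (hij : i ≠ j) (hik : i ≠ k) (hjk : j ≠ k) (ℓ m : Fin 3) :
    spinOp d ℓ j * spinOp d m k = Eop d (U3 d i j k 1 (P ℓ) (P m)) := by
  rw [spinOp_eq, spinOp_eq, Eop_mul]
  refine congrArg (Eop d) (funext fun a => ?_)
  by_cases hk : a = k
  · subst hk
    rw [Function.update_of_ne (Ne.symm hjk), Function.update_self, U3_k, one_mul]
  by_cases hj : a = j
  · subst hj
    rw [Function.update_self, Function.update_of_ne hjk, U3_j hjk, mul_one]
  by_cases hi : a = i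
  · subst hi
    rw [Function.update_of_ne hij, Function.update_of_ne hik, U3_i hij hik, mul_one]
  · rw [Function.update_of_ne hj, Function.update_of_ne hk, U3_other hi hj hk, one_mul]

lemma omega_U3_ij {i j k : Fin d} (hij : i ≠ j) (hik : i ≠ k) (hjk : j ≠ k) :
    omegaOp d i j = ∑ ℓ : Fin 3, Eop d (U3 d i j k (P ℓ) (P ℓ) 1) :=
  Finset.sum_congr rfl fun ℓ _ => spin_U3_ij hij hik hjk ℓ ℓ

lemma omega_U3_ik {i j k : Fin d} (hij : i ≠ j) (hik : i ≠ k) (hjk : j ≠ k) :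
    omegaOp d i k = ∑ ℓ : Fin 3, Eop d (U3 d i j k (P ℓ) 1 (P ℓ)) :=
  Finset.sum_congr rfl fun ℓ _ => spin_U3_ik hij hik hjk ℓ ℓ

lemma omega_U3_jk {i j k : Fin d} (hij : i ≠ j) (hik : i ≠ k) (hjk : j ≠ k) :
    omegaOp d j k = ∑ ℓ : Fin 3, Eop d (U3 d i j k 1 (P ℓ) (P ℓ)) :=
  Finset.sum_congr rfl fun ℓ _ => spin_U3_jk hij hik hjk ℓ ℓ

/-! Integer model of the Pauli matrices. -/

def pc : Fin 3 → Fin 2 → Fin 2 → GaussianInt :=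
  ![![![⟨0,0⟩, ⟨1,0⟩], ![⟨1,0⟩, ⟨0,0⟩]],
    ![![⟨0,0⟩, ⟨0,-1⟩], ![⟨0,1⟩, ⟨0,0⟩]],
    ![![⟨1,0⟩, ⟨0,0⟩], ![⟨0,0⟩, ⟨-1,0⟩]]]

def mulc (ℓ m : Fin 3) (p p' : Fin 2) : GaussianInt := ∑ t : Fin 2, pc ℓ p t * pc m t p'

set_option maxHeartbeats 1000000 in
lemma key_int (p p' q q' r r' : Fin 2) :
    ((∑ ℓ : Fin 3, ∑ m : Fin 3, mulc ℓ m p p' * pc ℓ q q' * pc m r r') +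
      (∑ ℓ : Fin 3, ∑ m : Fin 3, pc ℓ p p' * mulc ℓ m q q' * pc m r r'))
  = ((∑ u : Fin 3, ∑ v : Fin 3, mulc u v p p' * pc v q q' * pc u r r') +
      (∑ u : Fin 3, ∑ v : Fin 3, pc v p p' * mulc u v q q' * pc u r r')) := by
  revert p p' q q' r r'; decide

lemma P_apply (ℓ : Fin 3) (a b : Fin 2) :
    P ℓ a b = (1 / 2 : ℂ) * GaussianInt.toComplex (pc ℓ a b) := by
  fin_cases ℓ <;> fin_cases a <;> fin_cases b <;>
    simp [P, pauli, pc, GaussianInt.toComplex_def]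

lemma Pmul_apply (ℓ m : Fin 3) (a b : Fin 2) :
    (P ℓ * P m) a b = (1 / 4 : ℂ) * GaussianInt.toComplex (mulc ℓ m a b) := by
  simp only [Matrix.mul_apply, P_apply, mulc, map_sum, map_add, map_mul, Fin.sum_univ_two]
  ring

lemma key_calc (p p' q q' r r' : Fin 2) :
    ((∑ ℓ : Fin 3, ∑ m : Fin 3, (P ℓ * P m) p p' * P ℓ q q' * P m r r') +
      (∑ ℓ : Fin 3, ∑ m : Fin 3, P ℓ p p' * (P ℓ * P m) q q' * P m r r'))
  = ((∑ u : Fin 3, ∑ v : Fin 3, (P u * P v) p p' * P v q q' * P u r r') +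
      (∑ u : Fin 3, ∑ v : Fin 3, P v p p' * (P u * P v) q q' * P u r r')) := by
  have h := congrArg GaussianInt.toComplex (key_int p p' q q' r r')
  simp only [map_add, map_sum, map_mul, Fin.sum_univ_three] at h
  simp only [Pmul_apply, P_apply, Fin.sum_univ_three]
  linear_combination (1 / 16 : ℂ) * h

lemma omega_flat {i j k : Fin d} (hij : i ≠ j) (hik : i ≠ k) (hjk : j ≠ k) :
    omegaOp d i j * (omegaOp d i k + omegaOp d j k)
      = (omegaOp d i k + omegaOp d j k) * omegaOp d i j := by
  rw [omega_U3_ij hij hik hjk, omega_U3_ik hij hik hjk, omega_U3_jk hij hik hjk]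
  rw [mul_add, add_mul, Finset.sum_mul_sum, Finset.sum_mul_sum, Finset.sum_mul_sum,
    Finset.sum_mul_sum]
  simp only [EU3_mul hij hik hjk, one_mul, mul_one]
  ext x y
  simp only [Matrix.add_apply, Matrix.sum_apply, EU3_apply hij hik hjk]
  have h2 := congrArg (· * tail d i j k x y)
    (key_calc (x i) (y i) (x j) (y j) (x k) (y k))
  simp only [add_mul, Finset.sum_mul] at h2
  exact h2

end KZAux

namespace Part2
open KZAux
variable {d : ℕ}

lemma spin_comm {a b : Fin d} (h : a ≠ b) (ℓ m : Fin 3) :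
    spinOp d ℓ a * spinOp d m b = spinOp d m b * spinOp d ℓ a := by
  rw [spinOp_eq, spinOp_eq, Eop_mul, Eop_mul]
  refine congrArg (Eop d) (funext fun c => ?_)
  simp only [Function.update_apply]
  rcases eq_or_ne c a with rfl | ha
  · rw [if_pos rfl, if_neg h]
    simp only [one_mul, mul_one]
  · rw [if_neg ha]
    rcases eq_or_ne c b with rfl | hb
    · rw [if_pos rfl]
      simp only [one_mul, mul_one]
    · rw [if_neg hb]

lemma spin3_comm (a b : Fin d) : Commute (spinOp d 2 a) (spinOp d 2 b) := by
  rcases eq_or_ne a b with rfl | h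
  · exact Commute.refl _
  · exact spin_comm h 2 2

lemma spin3_pair (a b a' b' : Fin d) :
    Commute (spinOp d 2 a * spinOp d 2 b) (spinOp d 2 a' * spinOp d 2 b') :=
  Commute.mul_left ((spin3_comm a a').mul_right (spin3_comm a b'))
    ((spin3_comm b a').mul_right (spin3_comm b b'))

lemma omega_symm {a b : Fin d} (h : a ≠ b) : omegaOp d a b = omegaOp d b a :=
  Finset.sum_congr rfl fun ℓ _ => spin_comm h ℓ ℓ

end Part2


open KZAux Part2

/-- **The only symmetric flat deformation of the KZ form by a diagonal term is trivial**:
for `d ≥ 3` and `λ, μ ∈ ℂ`, the family `B_{ij} = λ Ω_{ij} + μ s₃^{(i)} ∘ s₃^{(j)}` on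
`(ℂ²)^{⊗d}` satisfies the infinitesimal pure braid relations iff `λμ = 0`. -/
theorem kz_diagonal_deformation_iff (d : ℕ) (hd : 3 ≤ d) (lam mu : ℂ) :
    (∀ B : Fin d → Fin d → Matrix (Fin d → Fin 2) (Fin d → Fin 2) ℂ,
      (∀ i j : Fin d, B i j = lam • omegaOp d i j + mu • (spinOp d 2 i * spinOp d 2 j)) →
      ((∀ i j k : Fin d, i < j → j < k →
          Commute (B i j) (B i k + B j k) ∧ Commute (B i j + B i k) (B j k)) ∧
        (∀ i j k l : Fin d, i ≠ j → i ≠ k → i ≠ l → j ≠ k → j ≠ l → k ≠ l →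
          Commute (B i j) (B k l))))
    ↔ lam * mu = 0 := by
  constructor
  · intro h
    obtain ⟨h3, -⟩ := h (fun i j => lam • omegaOp d i j + mu • (spinOp d 2 i * spinOp d 2 j))
      (fun _ _ => rfl)
    set i0 : Fin d := ⟨0, by omega⟩ with hi0
    set i1 : Fin d := ⟨1, by omega⟩ with hi1
    set i2 : Fin d := ⟨2, by omega⟩ with hi2
    have l01 : i0 < i1 := by rw [hi0, hi1]; exact Fin.mk_lt_mk.mpr (by norm_num)
    have l12 : i1 < i2 := by rw [hi1, hi2]; exact Fin.mk_lt_mk.mpr (by norm_num)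
    have h01 : i0 ≠ i1 := ne_of_lt l01
    have h12 : i1 ≠ i2 := ne_of_lt l12
    have h02 : i0 ≠ i2 := ne_of_lt (l01.trans l12)
    have hc := (h3 i0 i1 i2 l01 l12).1
    have hceq := hc.eq
    rw [show (lam • omegaOp d i0 i2 + mu • (spinOp d 2 i0 * spinOp d 2 i2))
          + (lam • omegaOp d i1 i2 + mu • (spinOp d 2 i1 * spinOp d 2 i2))
        = lam • (omegaOp d i0 i2 + omegaOp d i1 i2)
          + mu • ((spinOp d 2 i0 * spinOp d 2 i2) + (spinOp d 2 i1 * spinOp d 2 i2)) by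
      rw [smul_add, smul_add]; abel] at hceq
    have expand : ∀ X Y Z W : Matrix (Fin d → Fin 2) (Fin d → Fin 2) ℂ,
        (lam • X + mu • Y) * (lam • Z + mu • W)
          = (lam * lam) • (X * Z) + (lam * mu) • (X * W)
            + (mu * lam) • (Y * Z) + (mu * mu) • (Y * W) := by
      intro X Y Z W
      rw [add_mul, mul_add, mul_add, smul_mul_smul_comm, smul_mul_smul_comm,
        smul_mul_smul_comm, smul_mul_smul_comm]
      abel
    rw [expand, expand] at hceq
    rw [omega_flat h01 h02 h12] at hceq
    rw [show (spinOp d 2 i0 * spinOp d 2 i1)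
          * ((spinOp d 2 i0 * spinOp d 2 i2) + (spinOp d 2 i1 * spinOp d 2 i2))
        = ((spinOp d 2 i0 * spinOp d 2 i2) + (spinOp d 2 i1 * spinOp d 2 i2))
          * (spinOp d 2 i0 * spinOp d 2 i1) from
      ((spin3_pair i0 i1 i0 i2).add_right (spin3_pair i0 i1 i1 i2)).eq] at hceq
    set x : Fin d → Fin 2 := fun a => if a = i2 then 1 else 0 with hx
    set y : Fin d → Fin 2 := fun a => if a = i1 then 1 else 0 with hy
    have hx0 : x i0 = 0 := by simp [hx, h02]
    have hx1 : x i1 = 0 := by simp [hx, h12]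
    have hx2 : x i2 = 1 := by simp [hx]
    have hy0 : y i0 = 0 := by simp [hy, h01]
    have hy1 : y i1 = 1 := by simp [hy]
    have hy2 : y i2 = 0 := by simp [hy, (Ne.symm h12)]
    have htail : tail d i0 i1 i2 x y = 1 := by
      refine Finset.prod_eq_one fun a ha => ?_
      obtain ⟨hak, haj, hai, -⟩ : a ≠ i2 ∧ a ≠ i1 ∧ a ≠ i0 ∧ a ∈ Finset.univ := by
        simpa [Finset.mem_erase, and_assoc] using ha
      simp [hx, hy, hak, haj]
    have hS01 : spinOp d 2 i0 * spinOp d 2 i1 = Eop d (U3 d i0 i1 i2 (P 2) (P 2) 1) :=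
      spin_U3_ij h01 h02 h12 2 2
    have hS02 : spinOp d 2 i0 * spinOp d 2 i2 = Eop d (U3 d i0 i1 i2 (P 2) 1 (P 2)) :=
      spin_U3_ik h01 h02 h12 2 2
    have hS12 : spinOp d 2 i1 * spinOp d 2 i2 = Eop d (U3 d i0 i1 i2 1 (P 2) (P 2)) :=
      spin_U3_jk h01 h02 h12 2 2
    have hΩ01 := omega_U3_ij h01 h02 h12
    have hΩ02 := omega_U3_ik h01 h02 h12
    have hΩ12 := omega_U3_jk h01 h02 h12
    have hent := congrArg (fun M => M x y) hceq
    simp only [Matrix.add_apply, Matrix.smul_apply, smul_eq_mul] at hent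
    have e1 : (omegaOp d i0 i1
        * ((spinOp d 2 i0 * spinOp d 2 i2) + (spinOp d 2 i1 * spinOp d 2 i2))) x y = 0 := by
      rw [mul_add, hΩ01, hS02, hS12, Finset.sum_mul, Finset.sum_mul]
      simp only [EU3_mul h01 h02 h12, one_mul, mul_one, Matrix.add_apply, Matrix.sum_apply,
        EU3_apply h01 h02 h12]
      simp only [hx0, hx1, hx2, hy0, hy1, hy2, htail]
      simp only [Pmul_apply, P_apply, Fin.sum_univ_three]
      norm_num [pc, mulc, Fin.sum_univ_two, GaussianInt.toComplex_def, Matrix.cons_val_two,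
        Matrix.vecHead, Matrix.vecTail]
    have e2 : ((spinOp d 2 i0 * spinOp d 2 i1)
        * (omegaOp d i0 i2 + omegaOp d i1 i2)) x y = 1 / 8 := by
      rw [mul_add, hS01, hΩ02, hΩ12, Finset.mul_sum, Finset.mul_sum]
      simp only [EU3_mul h01 h02 h12, one_mul, mul_one, Matrix.add_apply, Matrix.sum_apply,
        EU3_apply h01 h02 h12]
      simp only [hx0, hx1, hx2, hy0, hy1, hy2, htail]
      simp only [Pmul_apply, P_apply, Fin.sum_univ_three]
      norm_num [pc, mulc, Fin.sum_univ_two, GaussianInt.toComplex_def, Matrix.cons_val_two,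
        Matrix.vecHead, Matrix.vecTail]
      linear_combination (-(1 / 16) : ℂ) * Complex.I_sq
    have e3 : ((omegaOp d i0 i2 + omegaOp d i1 i2)
        * (spinOp d 2 i0 * spinOp d 2 i1)) x y = -(1 / 8) := by
      rw [add_mul, hΩ02, hΩ12, hS01, Finset.sum_mul, Finset.sum_mul]
      simp only [EU3_mul h01 h02 h12, one_mul, mul_one, Matrix.add_apply, Matrix.sum_apply,
        EU3_apply h01 h02 h12]
      simp only [hx0, hx1, hx2, hy0, hy1, hy2, htail]
      simp only [Pmul_apply, P_apply, Fin.sum_univ_three]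
      norm_num [pc, mulc, Fin.sum_univ_two, GaussianInt.toComplex_def, Matrix.cons_val_two,
        Matrix.vecHead, Matrix.vecTail]
      linear_combination ((1 / 16) : ℂ) * Complex.I_sq
    have e4 : (((spinOp d 2 i0 * spinOp d 2 i2) + (spinOp d 2 i1 * spinOp d 2 i2))
        * omegaOp d i0 i1) x y = 0 := by
      rw [add_mul, hS02, hS12, hΩ01, Finset.mul_sum, Finset.mul_sum]
      simp only [EU3_mul h01 h02 h12, one_mul, mul_one, Matrix.add_apply, Matrix.sum_apply,
        EU3_apply h01 h02 h12]
      simp only [hx0, hx1, hx2, hy0, hy1, hy2, htail]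
      simp only [Pmul_apply, P_apply, Fin.sum_univ_three]
      norm_num [pc, mulc, Fin.sum_univ_two, GaussianInt.toComplex_def, Matrix.cons_val_two,
        Matrix.vecHead, Matrix.vecTail]
    rw [e1, e2, e3, e4] at hent
    linear_combination (4 : ℂ) * hent
  · intro hlm B hB
    have rel1 : ∀ a b c : Fin d, a ≠ b → a ≠ c → b ≠ c →
        Commute (B a b) (B a c + B b c) := by
      intro a b c hab hac hbc
      rw [hB a b, hB a c, hB b c]
      rcases mul_eq_zero.1 hlm with h0 | h0
      · rw [h0]
        simp only [zero_smul, zero_add]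
        exact ((((spin3_pair a b a c).smul_left mu).smul_right mu).add_right
          (((spin3_pair a b b c).smul_left mu).smul_right mu))
      · rw [h0]
        simp only [zero_smul, add_zero]
        have hof : Commute (omegaOp d a b) (omegaOp d a c + omegaOp d b c) :=
          omega_flat hab hac hbc
        rw [show lam • omegaOp d a c + lam • omegaOp d b c
            = lam • (omegaOp d a c + omegaOp d b c) from (smul_add lam _ _).symm]
        exact (hof.smul_left lam).smul_right lam
    have hBsymm : ∀ a b : Fin d, a ≠ b → B a b = B b a := by
      intro a b hab
      rw [hB a b, hB b a, omega_symm hab, spin_comm hab 2 2]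
    constructor
    · intro i j k hij hjk
      have h1 : i ≠ j := ne_of_lt hij
      have h2 : j ≠ k := ne_of_lt hjk
      have h3' : i ≠ k := ne_of_lt (hij.trans hjk)
      refine ⟨rel1 i j k h1 h3' h2, ?_⟩
      have h4 := rel1 j k i h2 (Ne.symm h1) (Ne.symm h3')
      rw [hBsymm j i (Ne.symm h1), hBsymm k i (Ne.symm h3')] at h4
      exact h4.symm
    · intro i j k l hij hik hil hjk hjl hkl
      rw [hB i j, hB k l]
      have base : ∀ ℓ m ℓ' m' : Fin 3,
          Commute (spinOp d ℓ i * spinOp d m j) (spinOp d ℓ' k * spinOp d m' l) := by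
        intro ℓ m ℓ' m'
        exact Commute.mul_left
          ((show Commute (spinOp d ℓ i) (spinOp d ℓ' k) from spin_comm hik ℓ ℓ').mul_right
            (show Commute (spinOp d ℓ i) (spinOp d m' l) from spin_comm hil ℓ m'))
          ((show Commute (spinOp d m j) (spinOp d ℓ' k) from spin_comm hjk m ℓ').mul_right
            (show Commute (spinOp d m j) (spinOp d m' l) from spin_comm hjl m m'))
      have cΩΩ : Commute (omegaOp d i j) (omegaOp d k l) := by
        unfold omegaOp
        exact Commute.sum_left _ _ _ fun ℓ _ =>
          Commute.sum_right _ _ _ fun m _ => base ℓ ℓ m m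
      have cΩS : Commute (omegaOp d i j) (spinOp d 2 k * spinOp d 2 l) := by
        unfold omegaOp
        exact Commute.sum_left _ _ _ fun ℓ _ => base ℓ ℓ 2 2
      have cSΩ : Commute (spinOp d 2 i * spinOp d 2 j) (omegaOp d k l) := by
        unfold omegaOp
        exact Commute.sum_right _ _ _ fun m _ => base 2 2 m m
      have cSS := base 2 2 2 2
      exact Commute.add_left
        (((cΩΩ.smul_left lam).smul_right lam).add_right ((cΩS.smul_left lam).smul_right mu))
        (((cSΩ.smul_left mu).smul_right lam).add_right ((cSS.smul_left mu).smul_right mu))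
end

section
/- The space (ℂ²)^{⊗d} is the internal direct sum of the joint eigenspaces of total spin: (ℂ²)^{⊗d} = ⨁_{k=0}^{⌊d/2⌋} ⨁_{r=0}^{d−2k} V_{l_k, l_k − r}, where l_k = (d − 2k)/2 and V_{l,m} = { v ∈ (ℂ²)^{⊗d} : L² v = l(l+1) v and L₃ v = m v }. -/
/-- The joint eigenspace `V_{c₁,c₂} = { v : L² v = c₁ v ∧ L₃ v = c₂ v }` of the total-spin
Casimir `L²` and of `L₃` on `(ℂ²)^{⊗d}`. -/
noncomputable def spinEigenspace (d : ℕ) (c₁ c₂ : ℂ) :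
    Submodule ℂ ((Fin d → Fin 2) → ℂ) :=
  LinearMap.ker (Matrix.toLin' (totalSpinSq d) - c₁ • LinearMap.id) ⊓
  LinearMap.ker (Matrix.toLin' (totalSpin d 2) - c₂ • LinearMap.id)



namespace SpinPf

/-- Local operator acting as `M` at site `a`. -/
noncomputable def locOp (d : ℕ) (M : Matrix (Fin 2) (Fin 2) ℂ) (a : Fin d) :
    Matrix (Fin d → Fin 2) (Fin d → Fin 2) ℂ :=
  Matrix.of fun x y => M (x a) (y a) * if ∀ b, b ≠ a → x b = y b then 1 else 0

theorem prod_delta (d : ℕ) (a : Fin d) (x y : Fin d → Fin 2) :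
    (∏ b ∈ Finset.univ.erase a, (if x b = y b then (1:ℂ) else 0)) =
      if ∀ b, b ≠ a → x b = y b then 1 else 0 := by
  rw [Finset.prod_boole]
  congr 1
  apply propext
  constructor
  · intro h b hb; exact h b (Finset.mem_erase.mpr ⟨hb, Finset.mem_univ b⟩)
  · intro h b hb; exact h b (Finset.mem_erase.mp hb).1

theorem locOp_apply (d : ℕ) (M : Matrix (Fin 2) (Fin 2) ℂ) (a : Fin d) (x y : Fin d → Fin 2) :
    locOp d M a x y = M (x a) (y a) * if ∀ b, b ≠ a → x b = y b then 1 else 0 := rfl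

theorem spinOp_eq_locOp (d : ℕ) (ℓ : Fin 3) (a : Fin d) :
    spinOp d ℓ a = locOp d ((1/2 : ℂ) • pauli ℓ) a := by
  ext x y
  rw [spinOp, locOp_apply, Matrix.of_apply, prod_delta]
  simp [Matrix.smul_apply]

theorem locOp_mul_same (d : ℕ) (M N : Matrix (Fin 2) (Fin 2) ℂ) (a : Fin d) :
    locOp d M a * locOp d N a = locOp d (M * N) a := by
  ext x y
  rw [Matrix.mul_apply]
  have hinj : Function.Injective (Function.update x a) := fun s t h => by
    have := congrFun h a; simpa using this
  rw [← Finset.sum_subset (Finset.subset_univ (Finset.univ.image (Function.update x a)))]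
  · rw [Finset.sum_image (fun s _ t _ h => hinj h)]
    rw [locOp_apply, Matrix.mul_apply, Finset.sum_mul]
    refine Finset.sum_congr rfl fun t _ => ?_
    rw [locOp_apply, locOp_apply]
    have h1 : (∀ b, b ≠ a → x b = Function.update x a t b) := by
      intro b hb; rw [Function.update_of_ne hb]
    have h2 : (∀ b, b ≠ a → Function.update x a t b = y b) ↔ (∀ b, b ≠ a → x b = y b) := by
      constructor <;> intro h b hb <;> have := h b hb <;>
        simpa [Function.update_of_ne hb] using this
    rw [Function.update_self, if_pos h1, if_congr h2 rfl rfl]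
    ring
  · intro z _ hz
    have : ¬ (∀ b, b ≠ a → x b = z b) := by
      intro h
      apply hz
      refine Finset.mem_image.mpr ⟨z a, Finset.mem_univ _, ?_⟩
      funext b
      by_cases hb : b = a
      · subst hb; simp
      · rw [Function.update_of_ne hb]; exact h b hb
    rw [locOp_apply, if_neg this, mul_zero, zero_mul]

theorem locOp_mul_ne (d : ℕ) (M N : Matrix (Fin 2) (Fin 2) ℂ) (a b : Fin d) (hab : a ≠ b)
    (x y : Fin d → Fin 2) :
    (locOp d M a * locOp d N b) x y =
      M (x a) (y a) * N (x b) (y b) * if ∀ c, c ≠ a → c ≠ b → x c = y c then 1 else 0 := by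
  rw [Matrix.mul_apply]
  rw [Finset.sum_eq_single (Function.update x a (y a))]
  · rw [locOp_apply, locOp_apply]
    have h1 : ∀ c, c ≠ a → x c = Function.update x a (y a) c := by
      intro c hc; rw [Function.update_of_ne hc]
    have h2 : (∀ c, c ≠ b → Function.update x a (y a) c = y c) ↔
        (∀ c, c ≠ a → c ≠ b → x c = y c) := by
      constructor
      · intro h c hca hcb
        have := h c hcb; rwa [Function.update_of_ne hca] at this
      · intro h c hcb
        by_cases hca : c = a
        · subst hca; simp
        · rw [Function.update_of_ne hca]; exact h c hca hcb
    rw [Function.update_self, if_pos h1, Function.update_of_ne (Ne.symm hab),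
      if_congr h2 rfl rfl]
    ring
  · intro z _ hz
    rw [locOp_apply, locOp_apply]
    by_cases h1 : ∀ c, c ≠ a → x c = z c
    · by_cases h2 : ∀ c, c ≠ b → z c = y c
      · exfalso; apply hz; funext c
        by_cases hca : c = a
        · rw [hca, Function.update_self]; exact h2 a hab
        · rw [Function.update_of_ne hca]; exact (h1 c hca).symm
      · rw [if_neg h2]; ring
    · rw [if_neg h1]; ring
  · intro h; exact absurd (Finset.mem_univ _) h

theorem locOp_mul_comm (d : ℕ) (M N : Matrix (Fin 2) (Fin 2) ℂ) (a b : Fin d) (hab : a ≠ b) :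
    locOp d M a * locOp d N b = locOp d N b * locOp d M a := by
  ext x y
  rw [locOp_mul_ne d M N a b hab, locOp_mul_ne d N M b a (Ne.symm hab)]
  have : (∀ c, c ≠ a → c ≠ b → x c = y c) ↔ (∀ c, c ≠ b → c ≠ a → x c = y c) := by tauto
  rw [if_congr this rfl rfl]; ring


theorem locOp_sub (d : ℕ) (M N : Matrix (Fin 2) (Fin 2) ℂ) (a : Fin d) :
    locOp d (M - N) a = locOp d M a - locOp d N a := by
  ext x y
  simp only [locOp_apply, Matrix.sub_apply, sub_mul]

theorem locOp_smul (d : ℕ) (c : ℂ) (M : Matrix (Fin 2) (Fin 2) ℂ) (a : Fin d) :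
    locOp d (c • M) a = c • locOp d M a := by
  ext x y
  simp only [locOp_apply, Matrix.smul_apply, smul_eq_mul, mul_assoc]

/-- Pauli commutation relations, packaged. -/
theorem pauli_comm01 : pauli 0 * pauli 1 - pauli 1 * pauli 0 = (2 * Complex.I) • pauli 2 := by
  show !![0, 1; 1, 0] * !![0, -Complex.I; Complex.I, 0] -
      !![0, -Complex.I; Complex.I, 0] * !![0, 1; 1, 0] = (2 * Complex.I) • !![1, 0; 0, -1]
  ext i j
  fin_cases i <;> fin_cases j <;>
    simp [Matrix.mul_apply, Fin.sum_univ_two, Complex.I_sq] <;> ring_nf <;>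
    simp [Complex.I_sq] <;> ring_nf

theorem pauli_comm12 : pauli 1 * pauli 2 - pauli 2 * pauli 1 = (2 * Complex.I) • pauli 0 := by
  show !![0, -Complex.I; Complex.I, 0] * !![1, 0; 0, -1] -
      !![1, 0; 0, -1] * !![0, -Complex.I; Complex.I, 0] = (2 * Complex.I) • !![0, 1; 1, 0]
  ext i j
  fin_cases i <;> fin_cases j <;>
    simp [Matrix.mul_apply, Fin.sum_univ_two, Complex.I_sq] <;> ring_nf <;>
    simp [Complex.I_sq] <;> ring_nf

theorem pauli_comm20 : pauli 2 * pauli 0 - pauli 0 * pauli 2 = (2 * Complex.I) • pauli 1 := by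
  show !![1, 0; 0, -1] * !![0, 1; 1, 0] -
      !![0, 1; 1, 0] * !![1, 0; 0, -1] = (2 * Complex.I) • !![0, -Complex.I; Complex.I, 0]
  ext i j
  fin_cases i <;> fin_cases j <;>
    simp [Matrix.mul_apply, Fin.sum_univ_two, Complex.I_sq] <;> ring_nf <;>
    simp [Complex.I_sq] <;> ring_nf

/-- The total spin commutation relations. -/
theorem totalSpin_comm (d : ℕ) (ℓ ℓ' ℓ'' : Fin 3)
    (h : pauli ℓ * pauli ℓ' - pauli ℓ' * pauli ℓ = (2 * Complex.I) • pauli ℓ'') :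
    totalSpin d ℓ * totalSpin d ℓ' - totalSpin d ℓ' * totalSpin d ℓ =
      Complex.I • totalSpin d ℓ'' := by
  unfold totalSpin
  rw [Finset.sum_mul_sum, Finset.sum_mul_sum]
  nth_rewrite 2 [Finset.sum_comm]
  rw [← Finset.sum_sub_distrib, Finset.smul_sum]
  refine Finset.sum_congr rfl fun a _ => ?_
  rw [← Finset.sum_sub_distrib, Finset.sum_eq_single a]
  · rw [spinOp_eq_locOp, spinOp_eq_locOp, spinOp_eq_locOp, locOp_mul_same, locOp_mul_same,
      ← locOp_sub, ← locOp_smul]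
    congr 1
    rw [smul_mul_assoc, mul_smul_comm, smul_mul_assoc, mul_smul_comm, smul_smul, smul_smul,
      ← smul_sub, h, smul_smul, smul_smul]
    congr 1
    ring
  · intro b _ hba
    rw [spinOp_eq_locOp, spinOp_eq_locOp, locOp_mul_comm d _ _ a b (fun hh => hba hh.symm),
      sub_self]
  · intro ha; exact absurd (Finset.mem_univ a) ha

section AbstractSl2

variable {R : Type*} [Ring R]

theorem sl2_aux {lp lm l3 c : R}
    (h1 : l3 * lp = lp * l3 + lp) (h2 : l3 * lm = lm * l3 - lm)
    (h3 : lp * lm = lm * lp + l3 + l3) (hc : c = lm * lp + l3 * l3 + l3) :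
    c * lp = lp * c ∧ c * lm = lm * c ∧ c * l3 = l3 * c ∧
      c = lp * lm + l3 * l3 - l3 := by
  have h1' : ∀ x : R, l3 * (lp * x) = lp * (l3 * x) + lp * x := fun x => by
    rw [← mul_assoc, h1, add_mul, mul_assoc]
  have h2' : ∀ x : R, l3 * (lm * x) = lm * (l3 * x) - lm * x := fun x => by
    rw [← mul_assoc, h2, sub_mul, mul_assoc]
  have h3' : ∀ x : R, lp * (lm * x) = lm * (lp * x) + l3 * x + l3 * x := fun x => by
    rw [← mul_assoc, h3, add_mul, add_mul, mul_assoc]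
  subst hc
  refine ⟨?_, ?_, ?_, ?_⟩ <;>
    simp only [mul_add, add_mul, sub_mul, mul_sub, mul_assoc, h1, h1', h2, h2', h3, h3'] <;>
    abel

end AbstractSl2

section Ladder

variable (d : ℕ)

/-- The raising operator `L₊ = L₁ + i L₂`. -/
noncomputable def ladderUp : Matrix (Fin d → Fin 2) (Fin d → Fin 2) ℂ :=
  totalSpin d 0 + Complex.I • totalSpin d 1

/-- The lowering operator `L₋ = L₁ - i L₂`. -/
noncomputable def ladderDown : Matrix (Fin d → Fin 2) (Fin d → Fin 2) ℂ :=
  totalSpin d 0 - Complex.I • totalSpin d 1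

theorem h10 : totalSpin d 1 * totalSpin d 0 =
    totalSpin d 0 * totalSpin d 1 - Complex.I • totalSpin d 2 := by
  rw [← totalSpin_comm d 0 1 2 pauli_comm01]; abel

theorem h20 : totalSpin d 2 * totalSpin d 0 =
    totalSpin d 0 * totalSpin d 2 + Complex.I • totalSpin d 1 := by
  rw [← totalSpin_comm d 2 0 1 pauli_comm20]; abel

theorem h21 : totalSpin d 2 * totalSpin d 1 =
    totalSpin d 1 * totalSpin d 2 - Complex.I • totalSpin d 0 := by
  rw [← totalSpin_comm d 1 2 0 pauli_comm12]; abel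

theorem comm_3p : totalSpin d 2 * ladderUp d = ladderUp d * totalSpin d 2 + ladderUp d := by
  simp only [ladderUp, mul_add, add_mul, mul_smul_comm, smul_mul_assoc, h20, h21,
    smul_sub, smul_add, smul_smul, Complex.I_mul_I, neg_one_smul]
  abel

theorem comm_3m : totalSpin d 2 * ladderDown d =
    ladderDown d * totalSpin d 2 - ladderDown d := by
  simp only [ladderDown, mul_sub, sub_mul, mul_smul_comm, smul_mul_assoc, h20, h21,
    smul_sub, smul_add, smul_smul, Complex.I_mul_I, neg_one_smul]
  abel

theorem down_mul_up : ladderDown d * ladderUp d =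
    totalSpin d 0 * totalSpin d 0 + totalSpin d 1 * totalSpin d 1 - totalSpin d 2 := by
  simp only [ladderDown, ladderUp, sub_mul, mul_add, mul_smul_comm, smul_mul_assoc, h10,
    smul_sub, smul_add, smul_smul, Complex.I_mul_I, neg_one_smul]
  abel

theorem up_mul_down : ladderUp d * ladderDown d =
    totalSpin d 0 * totalSpin d 0 + totalSpin d 1 * totalSpin d 1 + totalSpin d 2 := by
  simp only [ladderDown, ladderUp, add_mul, mul_sub, mul_smul_comm, smul_mul_assoc, h10,
    smul_sub, smul_add, smul_smul, Complex.I_mul_I, neg_one_smul]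
  abel

theorem comm_pm : ladderUp d * ladderDown d =
    ladderDown d * ladderUp d + totalSpin d 2 + totalSpin d 2 := by
  rw [up_mul_down, down_mul_up]; abel

theorem casimir_eq : totalSpinSq d =
    ladderDown d * ladderUp d + totalSpin d 2 * totalSpin d 2 + totalSpin d 2 := by
  rw [down_mul_up, totalSpinSq, Fin.sum_univ_three]
  abel

theorem casimir_facts :
    totalSpinSq d * ladderUp d = ladderUp d * totalSpinSq d ∧
    totalSpinSq d * ladderDown d = ladderDown d * totalSpinSq d ∧
    totalSpinSq d * totalSpin d 2 = totalSpin d 2 * totalSpinSq d ∧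
    totalSpinSq d = ladderUp d * ladderDown d + totalSpin d 2 * totalSpin d 2 - totalSpin d 2 :=
  sl2_aux (comm_3p d) (comm_3m d) (comm_pm d) (casimir_eq d)

end Ladder

section Hermitian

variable (d : ℕ)

theorem locOp_conjTranspose (M : Matrix (Fin 2) (Fin 2) ℂ) (a : Fin d) :
    (locOp d M a).conjTranspose = locOp d M.conjTranspose a := by
  ext x y
  rw [Matrix.conjTranspose_apply, locOp_apply, locOp_apply]
  have hiff : (∀ b, b ≠ a → y b = x b) ↔ (∀ b, b ≠ a → x b = y b) := by
    constructor <;> intro h b hb <;> exact (h b hb).symm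
  rw [star_mul', apply_ite (star : ℂ → ℂ), star_one, star_zero, if_congr hiff rfl rfl,
    Matrix.conjTranspose_apply]

theorem pauli_herm (ℓ : Fin 3) : (pauli ℓ).conjTranspose = pauli ℓ := by
  fin_cases ℓ <;> ext i j <;> fin_cases i <;> fin_cases j <;>
    simp [pauli, Matrix.conjTranspose_apply]

theorem totalSpin_herm (ℓ : Fin 3) : (totalSpin d ℓ).IsHermitian := by
  unfold Matrix.IsHermitian
  rw [totalSpin, Matrix.conjTranspose_sum]
  refine Finset.sum_congr rfl fun a _ => ?_
  rw [spinOp_eq_locOp, locOp_conjTranspose, Matrix.conjTranspose_smul, pauli_herm]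
  norm_num

theorem totalSpinSq_herm : (totalSpinSq d).IsHermitian := by
  unfold Matrix.IsHermitian
  rw [totalSpinSq, Matrix.conjTranspose_sum]
  refine Finset.sum_congr rfl fun ℓ _ => ?_
  rw [Matrix.conjTranspose_mul, totalSpin_herm]

end Hermitian

section Diagonal

variable (d : ℕ)

/-- number of sites in state `1`. -/
noncomputable def wt (x : Fin d → Fin 2) : ℕ := (Finset.univ.filter (fun a => x a = 1)).card

theorem wt_le (x : Fin d → Fin 2) : wt d x ≤ d := by
  classical
  simpa [wt] using Finset.card_filter_le Finset.univ (fun a => x a = 1)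

theorem pauli2_diag (t : Fin 2) : pauli 2 t t = if t = 1 then -1 else 1 := by
  fin_cases t <;> simp [pauli]

theorem pauli2_off (s t : Fin 2) (h : s ≠ t) : pauli 2 s t = 0 := by
  fin_cases s <;> fin_cases t <;> simp_all [pauli]

theorem totalSpin_two_diag :
    totalSpin d 2 = Matrix.diagonal (fun x => ((d : ℂ) - 2 * wt d x) / 2) := by
  ext x y
  rw [totalSpin, Matrix.sum_apply]
  by_cases hxy : x = y
  · subst hxy
    rw [Matrix.diagonal_apply_eq]
    have hterm : ∀ a : Fin d, spinOp d 2 a x x =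
        if x a = 1 then -(1/2 : ℂ) else (1/2 : ℂ) := by
      intro a
      rw [spinOp_eq_locOp, locOp_apply]
      have : (∀ b, b ≠ a → x b = x b) := fun _ _ => rfl
      rw [if_pos this, mul_one, Matrix.smul_apply, pauli2_diag, smul_eq_mul]
      by_cases h : x a = 1 <;> simp [h]
    simp_rw [hterm]
    rw [Finset.sum_ite, Finset.sum_const, Finset.sum_const, nsmul_eq_mul, nsmul_eq_mul]
    have hcard : (Finset.univ.filter (fun a => ¬ x a = 1)).card = d - wt d x := by
      have := Finset.card_filter_add_card_filter_not
        (s := (Finset.univ : Finset (Fin d))) (p := fun a => x a = 1)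
      simp only [Finset.card_univ, Fintype.card_fin] at this
      have hwt : wt d x = (Finset.univ.filter (fun a => x a = 1)).card := rfl
      omega
    rw [hcard]
    show (wt d x : ℂ) * (-(1/2)) + ((d - wt d x : ℕ) : ℂ) * (1/2) = _
    rw [Nat.cast_sub (wt_le d x)]
    ring
  · rw [Matrix.diagonal_apply_ne _ hxy]
    obtain ⟨b₀, hb₀⟩ := Function.ne_iff.mp hxy
    refine Finset.sum_eq_zero fun a _ => ?_
    rw [spinOp_eq_locOp, locOp_apply]
    by_cases hab : b₀ = a
    · subst hab
      rw [Matrix.smul_apply, pauli2_off _ _ hb₀]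
      simp
    · rw [if_neg (fun h => hb₀ (h b₀ hab)), mul_zero]

end Diagonal

section Spectrum

variable {d : ℕ}

theorem toLin'_mul' (M N : Matrix (Fin d → Fin 2) (Fin d → Fin 2) ℂ) :
    Matrix.toLin' (M * N) = Matrix.toLin' M * Matrix.toLin' N := by
  rw [Matrix.toLin'_mul]; rfl

theorem smul_cancel {a b : ℂ} {w : (Fin d → Fin 2) → ℂ} (hw : w ≠ 0)
    (h : a • w = b • w) : a = b :=
  smul_left_injective ℂ hw h

theorem B_eigen_form {c : ℂ} {v : (Fin d → Fin 2) → ℂ} (hv : v ≠ 0)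
    (h : Matrix.toLin' (totalSpin d 2) v = c • v) :
    ∃ n : ℕ, n ≤ d ∧ c = ((d : ℂ) - 2 * n) / 2 := by
  obtain ⟨x, hx⟩ := Function.ne_iff.mp hv
  rw [Pi.zero_apply] at hx
  refine ⟨wt d x, wt_le d x, ?_⟩
  have hx' := congrFun h x
  rw [Matrix.toLin'_apply, totalSpin_two_diag, Matrix.mulVec_diagonal, Pi.smul_apply,
    smul_eq_mul] at hx'
  exact (mul_right_cancel₀ hx hx').symm

theorem chain_gen {f g : Module.End ℂ ((Fin d → Fin 2) → ℂ)} {t : ℂ}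
    (hfg : f * g = g * f + t • g) {c : ℂ} {v : (Fin d → Fin 2) → ℂ}
    (h : f v = c • v) (j : ℕ) :
    f ((g ^ j) v) = (c + j * t) • ((g ^ j) v) := by
  induction j with
  | zero => simpa using h
  | succ j ih =>
    have hw : (g ^ (j + 1)) v = g ((g ^ j) v) := by rw [pow_succ', Module.End.mul_apply]
    rw [hw, ← Module.End.mul_apply, hfg, LinearMap.add_apply, Module.End.mul_apply, ih,
      map_smul, LinearMap.smul_apply, ← add_smul]
    have : c + ↑j * t + t = c + ↑(j + 1) * t := by push_cast; ring
    rw [this]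

/-- Main eigenvalue classification via the ladder-operator argument. -/
theorem classify (d : ℕ) {c₁ c₂ : ℂ} (hne : spinEigenspace d c₁ c₂ ≠ ⊥) :
    ∃ k r : ℕ, 2 * k ≤ d ∧ r ≤ d - 2 * k ∧
      c₁ = (((d : ℂ) - 2 * k) / 2) * ((((d : ℂ) - 2 * k) / 2) + 1) ∧
      c₂ = ((d : ℂ) - 2 * k) / 2 - r := by
  classical
  obtain ⟨v, hvmem, hvne⟩ := (Submodule.ne_bot_iff _).mp hne
  rw [spinEigenspace, Submodule.mem_inf] at hvmem
  obtain ⟨hm1, hm2⟩ := hvmem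
  rw [LinearMap.mem_ker, LinearMap.sub_apply, LinearMap.smul_apply, LinearMap.id_apply,
    sub_eq_zero] at hm1 hm2
  set EA := Matrix.toLin' (totalSpinSq d) with hEA
  set EB := Matrix.toLin' (totalSpin d 2) with hEB
  set Eu := Matrix.toLin' (ladderUp d) with hEu
  set Ed := Matrix.toLin' (ladderDown d) with hEd
  have fBu : EB * Eu = Eu * EB + (1 : ℂ) • Eu := by
    rw [hEB, hEu, ← toLin'_mul', ← toLin'_mul', one_smul, ← map_add, comm_3p]
  have fBd : EB * Ed = Ed * EB + (-1 : ℂ) • Ed := by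
    rw [hEB, hEd, ← toLin'_mul', ← toLin'_mul', comm_3m, map_sub]
    module
  have fAu : EA * Eu = Eu * EA + (0 : ℂ) • Eu := by
    rw [hEA, hEu, ← toLin'_mul', ← toLin'_mul', zero_smul, add_zero, (casimir_facts d).1]
  have fAd : EA * Ed = Ed * EA + (0 : ℂ) • Ed := by
    rw [hEA, hEd, ← toLin'_mul', ← toLin'_mul', zero_smul, add_zero, (casimir_facts d).2.1]
  have fC1 : EA = Ed * Eu + EB * EB + EB := by
    rw [hEA, hEB, hEu, hEd, ← toLin'_mul', ← toLin'_mul', ← map_add, ← map_add, casimir_eq]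
  have fC2 : EA = Eu * Ed + EB * EB - EB := by
    rw [hEA, hEB, hEu, hEd, ← toLin'_mul', ← toLin'_mul', ← map_add, ← map_sub,
      (casimir_facts d).2.2.2]
  -- the value of c₂
  obtain ⟨n₀, hn₀d, hn₀⟩ := B_eigen_form hvne hm2
  -- an upper ladder terminates
  have hex_up : ∃ j, (Eu ^ j) v = 0 := by
    refine ⟨d + 1, by_contra fun h' => ?_⟩
    have hB' := chain_gen fBu hm2 (d + 1)
    rw [mul_one] at hB'
    obtain ⟨n, hnd, hn⟩ := B_eigen_form h' hB'
    have : ((n₀ : ℕ) : ℂ) = ((n + d + 1 : ℕ) : ℂ) := by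
      rw [hn₀] at hn; push_cast at hn ⊢; linear_combination -hn
    have := Nat.cast_inj (R := ℂ) |>.mp this
    omega
  have hex_dn : ∃ j, (Ed ^ j) v = 0 := by
    refine ⟨d + 1, by_contra fun h' => ?_⟩
    have hB' := chain_gen fBd hm2 (d + 1)
    obtain ⟨n, hnd, hn⟩ := B_eigen_form h' hB'
    have : ((n : ℕ) : ℂ) = ((n₀ + d + 1 : ℕ) : ℂ) := by
      rw [hn₀] at hn; push_cast at hn ⊢; linear_combination hn
    have := Nat.cast_inj (R := ℂ) |>.mp this
    omega
  -- highest weight vector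
  set j₀ := Nat.find hex_up with hj₀def
  have hj₀ : (Eu ^ j₀) v = 0 := Nat.find_spec hex_up
  have hj₀ne : j₀ ≠ 0 := by
    intro h
    rw [h, pow_zero, Module.End.one_apply] at hj₀
    exact hvne hj₀
  set j := j₀ - 1 with hjdef
  have hw_ne : (Eu ^ j) v ≠ 0 := Nat.find_min hex_up (by omega)
  set w := (Eu ^ j) v with hwdef
  have hEuw : Eu w = 0 := by
    rw [hwdef, ← Module.End.mul_apply, ← pow_succ']
    have : j + 1 = j₀ := by omega
    rw [this, hj₀]
  have hBw : EB w = (c₂ + j) • w := by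
    have := chain_gen fBu hm2 j; rw [mul_one] at this; exact this
  have hAw : EA w = c₁ • w := by
    have := chain_gen fAu hm1 j; rw [mul_zero, add_zero] at this; exact this
  have hc₁ : c₁ = (c₂ + j) * ((c₂ + j) + 1) := by
    have h1 : EA w = ((c₂ + j) * ((c₂ + j) + 1)) • w := by
      rw [fC1, LinearMap.add_apply, LinearMap.add_apply, Module.End.mul_apply,
        Module.End.mul_apply, hEuw, map_zero, hBw, map_smul, hBw, smul_smul]
      rw [zero_add, ← add_smul]
      congr 1; ring
    exact smul_cancel hw_ne (hAw ▸ h1)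
  -- lowest weight vector
  set j₀' := Nat.find hex_dn with hj₀'def
  have hj₀' : (Ed ^ j₀') v = 0 := Nat.find_spec hex_dn
  have hj₀'ne : j₀' ≠ 0 := by
    intro h
    rw [h, pow_zero, Module.End.one_apply] at hj₀'
    exact hvne hj₀'
  set j' := j₀' - 1 with hj'def
  have hw'_ne : (Ed ^ j') v ≠ 0 := Nat.find_min hex_dn (by omega)
  set w' := (Ed ^ j') v with hw'def
  have hEdw' : Ed w' = 0 := by
    rw [hw'def, ← Module.End.mul_apply, ← pow_succ']
    have : j' + 1 = j₀' := by omega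
    rw [this, hj₀']
  have hBw' : EB w' = (c₂ - j') • w' := by
    have := chain_gen fBd hm2 j'
    rw [show c₂ + ↑j' * (-1) = c₂ - j' by ring] at this; exact this
  have hAw' : EA w' = c₁ • w' := by
    have := chain_gen fAd hm1 j'; rw [mul_zero, add_zero] at this; exact this
  have hc₁' : c₁ = (c₂ - j') * ((c₂ - j') - 1) := by
    have h1 : EA w' = ((c₂ - j') * ((c₂ - j') - 1)) • w' := by
      rw [fC2, LinearMap.sub_apply, LinearMap.add_apply, Module.End.mul_apply,
        Module.End.mul_apply, hEdw', map_zero, hBw', map_smul, hBw', smul_smul]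
      rw [zero_add, ← sub_smul]
      congr 1; ring
    exact smul_cancel hw'_ne (hAw' ▸ h1)
  -- resolve the quadratic
  have hkey : ((c₂ + ↑j) - (↑j' - c₂)) * ((c₂ + ↑j) + (↑j' - c₂) + 1) = 0 := by
    linear_combination hc₁' - hc₁
  have hll' : c₂ + ↑j = ↑j' - c₂ := by
    rcases mul_eq_zero.mp hkey with h | h
    · exact sub_eq_zero.mp h
    · exfalso
      have heq : (c₂ + ↑j) + (↑j' - c₂) + 1 = ((j + j' + 1 : ℕ) : ℂ) := by push_cast; ring
      rw [heq] at h
      exact Nat.cast_ne_zero.mpr (by omega) h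
  -- the highest weight is an eigenvalue of L₃
  obtain ⟨k, hkd, hk⟩ := B_eigen_form hw_ne hBw
  have hdk : d = j + j' + 2 * k := by
    have h2l : ((d : ℕ) : ℂ) = ((j + j' + 2 * k : ℕ) : ℂ) := by
      push_cast
      linear_combination (-2) * hk + hll'
    exact Nat.cast_inj (R := ℂ) |>.mp h2l
  refine ⟨k, j, by omega, by omega, ?_, ?_⟩
  · rw [hc₁, hk]
  · linear_combination hk

end Spectrum

section Assembly

open Module.End

variable (d : ℕ)

noncomputable def Aop : Module.End ℂ (EuclideanSpace ℂ (Fin d → Fin 2)) :=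
  Matrix.toEuclideanLin (totalSpinSq d)

noncomputable def Bop : Module.End ℂ (EuclideanSpace ℂ (Fin d → Fin 2)) :=
  Matrix.toEuclideanLin (totalSpin d 2)

theorem Aop_symm : (Aop d).IsSymmetric :=
  Matrix.isHermitian_iff_isSymmetric.mp (totalSpinSq_herm d)

theorem Bop_symm : (Bop d).IsSymmetric :=
  Matrix.isHermitian_iff_isSymmetric.mp (totalSpin_herm d 2)

theorem AB_comm : Commute (Aop d) (Bop d) := by
  have hpi : Matrix.toLin' (totalSpinSq d) * Matrix.toLin' (totalSpin d 2) =
      Matrix.toLin' (totalSpin d 2) * Matrix.toLin' (totalSpinSq d) := by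
    rw [← toLin'_mul', ← toLin'_mul', (casimir_facts d).2.2.1]
  show Matrix.toEuclideanLin (totalSpinSq d) * Matrix.toEuclideanLin (totalSpin d 2) =
    Matrix.toEuclideanLin (totalSpin d 2) * Matrix.toEuclideanLin (totalSpinSq d)
  rw [Module.End.mul_eq_comp, Module.End.mul_eq_comp, ← Matrix.toLpLin_mul_same,
    ← Matrix.toLpLin_mul_same, (casimir_facts d).2.2.1]

theorem isInternal_map {M N : Type*} [AddCommGroup M] [Module ℂ M] [AddCommGroup N]
    [Module ℂ N] (f : M ≃ₗ[ℂ] N) {ι : Type*} [DecidableEq ι] (F : ι → Submodule ℂ M)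
    (h : DirectSum.IsInternal F) :
    DirectSum.IsInternal (fun i => (F i).map (f : M →ₗ[ℂ] N)) := by
  rw [DirectSum.isInternal_submodule_iff_iSupIndep_and_iSup_eq_top] at h ⊢
  constructor
  · exact (iSupIndep_map_orderIso_iff (Submodule.orderIsoMapComap
      (f : M ≃ₛₗ[RingHom.id ℂ] N))).mpr h.1
  · rw [← Submodule.map_iSup, h.2, Submodule.map_top, LinearEquiv.range]

/-- The equivalence between `EuclideanSpace` and the plain pi type. -/
noncomputable def phi (d : ℕ) :
    EuclideanSpace ℂ (Fin d → Fin 2) ≃ₗ[ℂ] ((Fin d → Fin 2) → ℂ) :=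
  WithLp.linearEquiv 2 ℂ _

/-- the joint eigenspace family on Euclidean space. -/
noncomputable def GE : ℂ × ℂ → Submodule ℂ (EuclideanSpace ℂ (Fin d → Fin 2)) :=
  fun i => eigenspace (Aop d) i.2 ⊓ eigenspace (Bop d) i.1

theorem GE_internal : DirectSum.IsInternal (GE d) :=
  LinearMap.IsSymmetric.directSum_isInternal_of_commute (Aop_symm d) (Bop_symm d) (AB_comm d)

/-- the joint eigenspace family, regarded as submodules of the plain pi type. -/
noncomputable def G : ℂ × ℂ → Submodule ℂ ((Fin d → Fin 2) → ℂ) :=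
  fun i => (GE d i).map (phi d : _ →ₗ[ℂ] _)

theorem G_internal : DirectSum.IsInternal (G d) :=
  isInternal_map (phi d) (GE d) (GE_internal d)

theorem spinEigenspace_eq (c₁ c₂ : ℂ) : spinEigenspace d c₁ c₂ = G d (c₂, c₁) := by
  ext v
  rw [G, Submodule.mem_map_equiv]
  show _ ↔ (phi d).symm v ∈ eigenspace (Aop d) c₁ ⊓ eigenspace (Bop d) c₂
  simp only [spinEigenspace, Submodule.mem_inf, LinearMap.mem_ker, LinearMap.sub_apply,
    LinearMap.smul_apply, LinearMap.id_apply, sub_eq_zero, Module.End.mem_eigenspace_iff]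
  simp [Aop, Bop, phi, Matrix.toLin'_apply, Matrix.toEuclideanLin_apply, ← WithLp.toLp_smul,
    (WithLp.toLp_injective 2).eq_iff]

theorem isInternal_of_comp {ι κ : Type*} [DecidableEq ι] [DecidableEq κ] {M : Type*}
    [AddCommGroup M] [Module ℂ M]
    (G : ι → Submodule ℂ M) (e : κ → ι) (he : Function.Injective e)
    (hG : DirectSum.IsInternal G) (hbot : ∀ i, i ∉ Set.range e → G i = ⊥) :
    DirectSum.IsInternal (fun k => G (e k)) := by
  rw [DirectSum.isInternal_submodule_iff_iSupIndep_and_iSup_eq_top] at hG ⊢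
  refine ⟨hG.1.comp he, ?_⟩
  rw [eq_top_iff, ← hG.2]
  refine iSup_le fun i => ?_
  by_cases h : i ∈ Set.range e
  · obtain ⟨k, rfl⟩ := h
    exact le_iSup (fun k => G (e k)) k
  · rw [hbot i h]; exact bot_le

theorem lk_inj {kp kq : ℕ} (hp : 2 * kp ≤ d) (hq : 2 * kq ≤ d)
    (h : (((d : ℂ) - 2 * kp) / 2) * ((((d : ℂ) - 2 * kp) / 2) + 1) =
      (((d : ℂ) - 2 * kq) / 2) * ((((d : ℂ) - 2 * kq) / 2) + 1)) : kp = kq := by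
  have hfac : ((((d : ℂ) - 2 * kp) / 2) - (((d : ℂ) - 2 * kq) / 2)) *
      ((((d : ℂ) - 2 * kp) / 2) + (((d : ℂ) - 2 * kq) / 2) + 1) = 0 := by
    linear_combination h
  rcases mul_eq_zero.mp hfac with h' | h'
  · have : ((kp : ℕ) : ℂ) = ((kq : ℕ) : ℂ) := by linear_combination -h'
    exact Nat.cast_inj (R := ℂ) |>.mp this
  · exfalso
    have he : (((d : ℂ) - 2 * kp) / 2) + (((d : ℂ) - 2 * kq) / 2) + 1 =
        (((d - 2 * kp) + (d - 2 * kq) + 2 : ℕ) : ℂ) / 2 := by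
      rw [Nat.cast_add, Nat.cast_add, Nat.cast_sub hp, Nat.cast_sub hq]
      push_cast; ring
    rw [he] at h'
    exact div_ne_zero (Nat.cast_ne_zero.mpr (by omega)) two_ne_zero h'

end Assembly
end SpinPf


/-- **Total-spin decomposition of `(ℂ²)^{⊗d}`**: the space is the internal direct sum of
the joint eigenspaces `V_{l_k, l_k − r}` for `0 ≤ k ≤ ⌊d/2⌋` and `0 ≤ r ≤ d − 2k`, where
`l_k = (d − 2k)/2` and `V_{l,m}` is the joint eigenspace of `L²` (eigenvalue `l(l+1)`) and
`L₃` (eigenvalue `m`). -/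
theorem spin_direct_sum (d : ℕ) (hd : 1 ≤ d) :
    DirectSum.IsInternal
      (fun p : Σ k : Fin (d / 2 + 1), Fin (d - 2 * (k : ℕ) + 1) =>
        spinEigenspace d
          ((((d : ℂ) - 2 * (p.1 : ℕ)) / 2) * ((((d : ℂ) - 2 * (p.1 : ℕ)) / 2) + 1))
          ((((d : ℂ) - 2 * (p.1 : ℕ)) / 2) - (p.2 : ℕ))) := by
  classical
  set e : (Σ k : Fin (d / 2 + 1), Fin (d - 2 * (k : ℕ) + 1)) → ℂ × ℂ :=
    fun p => ((((d : ℂ) - 2 * (p.1 : ℕ)) / 2) - (p.2 : ℕ),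
      (((d : ℂ) - 2 * (p.1 : ℕ)) / 2) * ((((d : ℂ) - 2 * (p.1 : ℕ)) / 2) + 1)) with he
  have hfam : (fun p : Σ k : Fin (d / 2 + 1), Fin (d - 2 * (k : ℕ) + 1) =>
      spinEigenspace d
        ((((d : ℂ) - 2 * (p.1 : ℕ)) / 2) * ((((d : ℂ) - 2 * (p.1 : ℕ)) / 2) + 1))
        ((((d : ℂ) - 2 * (p.1 : ℕ)) / 2) - (p.2 : ℕ))) = fun p => SpinPf.G d (e p) :=
    funext fun p => SpinPf.spinEigenspace_eq d _ _
  rw [hfam]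
  refine SpinPf.isInternal_of_comp (SpinPf.G d) e ?_ (SpinPf.G_internal d) ?_
  · rintro ⟨⟨kp, hkp⟩, ⟨rp, hrp⟩⟩ ⟨⟨kq, hkq⟩, ⟨rq, hrq⟩⟩ hpq
    simp only [he, Prod.mk.injEq] at hpq
    obtain ⟨h1, h2⟩ := hpq
    have hk : kp = kq := SpinPf.lk_inj d (by omega) (by omega) h2
    subst hk
    have hr : (rp : ℂ) = (rq : ℂ) := by linear_combination -h1
    have hr' : rp = rq := Nat.cast_inj.mp hr
    subst hr'
    rfl
  · intro i hi
    by_contra hbot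
    have hne : spinEigenspace d i.2 i.1 ≠ ⊥ := by
      rw [SpinPf.spinEigenspace_eq d i.2 i.1, Prod.mk.eta]
      exact hbot
    obtain ⟨k, r, hk, hr, hc1, hc2⟩ := SpinPf.classify d hne
    apply hi
    refine ⟨⟨⟨k, by omega⟩, ⟨r, by show r < d - 2 * k + 1; omega⟩⟩, ?_⟩
    rw [he]
    exact Prod.ext hc2.symm hc1.symm
end

section
/- Let d ≥ 1, let S be the d × d matrix with S_{ii} = 1, S_{ij} = 2(−1)^{j−i} for j > i, S_{ij} = 0 for j < i, and let Cox := −(Sᵀ)^{−1} S. If d is odd then Cox² = 1 (so Cox is semisimple with minimal polynomial dividing z² − 1). If d is even then (Cox − 1)² = 0 while Cox ≠ 1, i.e. Cox is unipotent with a single nontrivial Jordan block of size 2 (indeed Cox − 1 has rank 1). -/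
open Matrix Finset

/-- The Stokes matrix of the tt* Riemann–Hilbert problem for the Ising `d`-point
functions: the upper unitriangular matrix with `S_{ii} = 1`, `S_{ij} = 2(−1)^{j−i}`
for `j > i` and `S_{ij} = 0` for `j < i`. -/
def isingStokes (d : ℕ) : Matrix (Fin d) (Fin d) ℚ :=
  Matrix.of fun i j =>
    if i = j then 1 else if i < j then 2 * (-1 : ℚ) ^ ((j : ℕ) - (i : ℕ)) else 0

/-- The Coxeter element `Cox = −(Sᵀ)⁻¹ S` (minus the 2d quantum monodromy). -/
noncomputable def isingCoxeter (d : ℕ) : Matrix (Fin d) (Fin d) ℚ :=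
  -(((isingStokes d)ᵀ)⁻¹ * isingStokes d)

def isingR (d : ℕ) : Matrix (Fin d) (Fin d) ℚ :=
  Matrix.of fun _ j => 2 * (-1 : ℚ) ^ ((j : ℕ) + 1)

lemma altsum_range (n : ℕ) :
    ∑ k ∈ range n, 2 * (-1 : ℚ) ^ (k + 1) = if Even n then 0 else -2 := by
  have : ∀ k : ℕ, 2 * (-1 : ℚ) ^ (k + 1) = (-1 : ℚ) ^ k * (-2) := by
    intro k; rw [pow_succ]; ring
  rw [Finset.sum_congr rfl fun k _ => this k, ← Finset.sum_mul, neg_one_geom_sum]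
  split_ifs <;> ring

lemma altsum_fin (d : ℕ) :
    ∑ k : Fin d, 2 * (-1 : ℚ) ^ ((k : ℕ) + 1) = if Even d then 0 else -2 := by
  rw [Fin.sum_univ_eq_sum_range (fun k => 2 * (-1 : ℚ) ^ (k + 1)) d, altsum_range]

lemma isingStokes_colsum (d : ℕ) (i : Fin d) :
    ∑ k : Fin d, isingStokes d k i = (-1 : ℚ) ^ (i : ℕ) := by
  set g : ℕ → ℚ := fun k => if k = (i : ℕ) then 1 else if k < (i : ℕ) then
      2 * (-1 : ℚ) ^ ((i : ℕ) - k) else 0 with hg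
  have h1 : ∑ k : Fin d, isingStokes d k i = ∑ k ∈ range d, g k := by
    rw [← Fin.sum_univ_eq_sum_range g d]
    refine Finset.sum_congr rfl fun k _ => ?_
    simp only [isingStokes, of_apply, hg, Fin.ext_iff, Fin.lt_def]
  have h2 : ∑ k ∈ range d, g k = ∑ k ∈ range ((i : ℕ) + 1), g k := by
    refine (Finset.sum_subset (Finset.range_subset_range.2 i.2) ?_).symm
    intro x _ hx
    rw [Finset.mem_range] at hx
    have hx1 : x ≠ (i : ℕ) := by omega
    have hx2 : ¬ x < (i : ℕ) := by omega
    simp [hg, hx1, hx2]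
  have h3 : ∑ k ∈ range ((i : ℕ) + 1), g k
      = (∑ k ∈ range (i : ℕ), 2 * (-1 : ℚ) ^ ((i : ℕ) - k)) + 1 := by
    rw [Finset.sum_range_succ]
    congr 1
    · refine Finset.sum_congr rfl fun k hk => ?_
      rw [Finset.mem_range] at hk
      simp [hg, hk.ne, hk]
    · simp [hg]
  have h4 : ∑ k ∈ range (i : ℕ), 2 * (-1 : ℚ) ^ ((i : ℕ) - k)
      = ∑ k ∈ range (i : ℕ), 2 * (-1 : ℚ) ^ (k + 1) := by
    rw [← Finset.sum_range_reflect (fun k => 2 * (-1 : ℚ) ^ (k + 1)) (i : ℕ)]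
    refine Finset.sum_congr rfl fun k hk => ?_
    rw [Finset.mem_range] at hk
    congr 2
    omega
  rw [h1, h2, h3, h4, altsum_range]
  rcases Nat.even_or_odd (i : ℕ) with h | h
  · rw [if_pos h, h.neg_one_pow]; ring
  · rw [if_neg (Nat.not_even_iff_odd.2 h), h.neg_one_pow]; ring

lemma isingStokes_transpose_mul (d : ℕ) :
    (isingStokes d)ᵀ * (1 + isingR d) = -(isingStokes d) := by
  ext i j
  rw [Matrix.mul_add, Matrix.mul_one, Matrix.add_apply]
  have hR : ((isingStokes d)ᵀ * isingR d) i j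
      = (-1 : ℚ) ^ (i : ℕ) * (2 * (-1 : ℚ) ^ ((j : ℕ) + 1)) := by
    rw [Matrix.mul_apply]
    simp only [isingR, transpose_apply, of_apply]
    rw [← Finset.sum_mul, isingStokes_colsum]
  rw [hR]
  simp only [transpose_apply, Matrix.neg_apply, isingStokes, of_apply]
  rcases lt_trichotomy i j with h | h | h
  · have hij : (i : ℕ) < (j : ℕ) := h
    have hne : j ≠ i := (ne_of_lt h).symm
    have hne' : i ≠ j := ne_of_lt h
    have hnl : ¬ j < i := not_lt.2 h.le
    rw [if_neg hne, if_neg hnl, if_neg hne', if_pos h, pow_succ]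
    have key : (-1 : ℚ) ^ ((j : ℕ) - (i : ℕ)) * (-1 : ℚ) ^ (i : ℕ)
        = (-1 : ℚ) ^ (j : ℕ) := by
      rw [← pow_add, show (j : ℕ) - (i : ℕ) + (i : ℕ) = (j : ℕ) by omega]
    have h2 : (-1 : ℚ) ^ (i : ℕ) * (-1 : ℚ) ^ (i : ℕ) = 1 := by
      rw [← pow_add, show (i : ℕ) + (i : ℕ) = 2 * (i : ℕ) by omega, pow_mul]
      norm_num
    linear_combination (2 * (-1 : ℚ) ^ (i : ℕ)) * key
      - (2 * (-1 : ℚ) ^ ((j : ℕ) - (i : ℕ))) * h2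
  · subst h
    rw [if_pos rfl, pow_succ]
    have h2 : (-1 : ℚ) ^ (i : ℕ) * (-1 : ℚ) ^ (i : ℕ) = 1 := by
      rw [← pow_add, show (i : ℕ) + (i : ℕ) = 2 * (i : ℕ) by omega, pow_mul]
      norm_num
    linear_combination (-2 : ℚ) * h2
  · have hij : (j : ℕ) < (i : ℕ) := h
    have hne : j ≠ i := ne_of_lt h
    have hne' : i ≠ j := (ne_of_lt h).symm
    have hnl : ¬ i < j := not_lt.2 h.le
    rw [if_neg hne, if_pos h, if_neg hne', if_neg hnl, pow_succ]
    have key : (-1 : ℚ) ^ ((i : ℕ) - (j : ℕ)) * (-1 : ℚ) ^ (j : ℕ)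
        = (-1 : ℚ) ^ (i : ℕ) := by
      rw [← pow_add, show (i : ℕ) - (j : ℕ) + (j : ℕ) = (i : ℕ) by omega]
    have h2 : (-1 : ℚ) ^ (j : ℕ) * (-1 : ℚ) ^ (j : ℕ) = 1 := by
      rw [← pow_add, show (j : ℕ) + (j : ℕ) = 2 * (j : ℕ) by omega, pow_mul]
      norm_num
    linear_combination (2 * (-1 : ℚ) ^ (j : ℕ)) * key
      - (2 * (-1 : ℚ) ^ ((i : ℕ) - (j : ℕ))) * h2

lemma isingStokes_det (d : ℕ) : (isingStokes d).det = 1 := by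
  have h : (isingStokes d).BlockTriangular id := by
    intro i j hij
    have hne : i ≠ j := (ne_of_lt hij).symm
    have hnl : ¬ i < j := not_lt.2 (le_of_lt hij)
    simp [isingStokes, hne, hnl]
  rw [Matrix.det_of_upperTriangular h]
  simp [isingStokes]

lemma isingCoxeter_eq (d : ℕ) : isingCoxeter d = 1 + isingR d := by
  have hdet : IsUnit (isingStokes d)ᵀ.det := by
    rw [Matrix.det_transpose, isingStokes_det]; exact isUnit_one
  calc isingCoxeter d = ((isingStokes d)ᵀ)⁻¹ * (-(isingStokes d)) := by
        rw [isingCoxeter, Matrix.mul_neg]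
    _ = ((isingStokes d)ᵀ)⁻¹ * ((isingStokes d)ᵀ * (1 + isingR d)) := by
        rw [isingStokes_transpose_mul]
    _ = 1 + isingR d := by
        rw [← Matrix.mul_assoc, Matrix.nonsing_inv_mul _ hdet, Matrix.one_mul]

lemma isingR_mul_isingR (d : ℕ) :
    isingR d * isingR d = (if Even d then (0 : ℚ) else -2) • isingR d := by
  ext i j
  rw [Matrix.mul_apply]
  simp only [isingR, of_apply, Matrix.smul_apply, smul_eq_mul]
  rw [← Finset.sum_mul, altsum_fin]

/-- **Jordan structure of the Ising Coxeter element**: if `d` is odd then `Cox² = 1`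
(`Cox` is semisimple with minimal polynomial dividing `z² − 1`); if `d` is even then
`(Cox − 1)² = 0` while `Cox ≠ 1`, i.e. `Cox` is unipotent with a single nontrivial Jordan
block of size 2 (indeed `Cox − 1` has rank `1`). -/
theorem isingCoxeter_jordan_structure (d : ℕ) (hd : 1 ≤ d) :
    (Odd d → isingCoxeter d ^ 2 = 1) ∧
    (Even d → (isingCoxeter d - 1) ^ 2 = 0 ∧ isingCoxeter d ≠ 1 ∧
      (isingCoxeter d - 1).rank = 1) := by
  rw [isingCoxeter_eq]
  have hsq : ((1 : Matrix (Fin d) (Fin d) ℚ) + isingR d) ^ 2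
      = 1 + (2 : ℚ) • isingR d + isingR d * isingR d := by
    have : ((1 : Matrix (Fin d) (Fin d) ℚ) + isingR d) ^ 2
        = 1 + isingR d + isingR d + isingR d * isingR d := by
      rw [sq]; noncomm_ring
    rw [this, two_smul]; abel
  constructor
  · intro hodd
    have hmul := isingR_mul_isingR d
    rw [if_neg (Nat.not_even_iff_odd.2 hodd)] at hmul
    rw [hsq, hmul, show ((-2 : ℚ)) • isingR d = -((2 : ℚ) • isingR d) by
      rw [← neg_smul]]
    abel
  · intro heven
    have hR0 : isingR d * isingR d = 0 := by
      rw [isingR_mul_isingR d, if_pos heven, zero_smul]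
    refine ⟨by rw [add_sub_cancel_left, sq]; exact hR0, ?_, ?_⟩
    · intro h
      have := congrFun (congrFun h ⟨0, hd⟩) ⟨0, hd⟩
      simp only [Matrix.add_apply, Matrix.one_apply_eq, isingR, of_apply] at this
      norm_num at this
    · rw [add_sub_cancel_left]
      have hrange : LinearMap.range (isingR d).mulVecLin
          = Submodule.span ℚ {(fun _ => 1 : Fin d → ℚ)} := by
        apply le_antisymm
        · rintro x ⟨y, rfl⟩
          rw [Matrix.mulVecLin_apply]
          have : (isingR d).mulVec y
              = (∑ k : Fin d, 2 * (-1 : ℚ) ^ ((k : ℕ) + 1) * y k)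
                • (fun _ => 1 : Fin d → ℚ) := by
            ext i
            simp [Matrix.mulVec, dotProduct, isingR]
          rw [this]
          exact Submodule.smul_mem _ _ (Submodule.mem_span_singleton_self _)
        · rw [Submodule.span_singleton_le_iff_mem]
          refine ⟨(fun k => if k = (⟨0, hd⟩ : Fin d) then (-1/2 : ℚ) else 0), ?_⟩
          rw [Matrix.mulVecLin_apply]
          ext i
          simp [Matrix.mulVec, dotProduct, isingR, mul_ite]
          norm_num
      rw [Matrix.rank, hrange]
      exact finrank_span_singleton (by
        intro h
        have := congrFun h ⟨0, hd⟩
        norm_num at this)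
end

section
/- Arithmetic classification of filling fractions compatible with integrally quantized Knizhnik–Zamolodchikov level: let a, b be coprime positive integers with a ≤ b, and suppose there exist integers κ, m with κ ≠ −2 and a sign ε ∈ {1, −1} such that a(κ + 2) = 2εb + 2mb(κ + 2) (i.e. a/b ≡ ε·2/(κ+2) modulo 2ℤ). Then either a = 1 and κ is even, or a = 2 and both b and κ are odd. Consequently the corresponding filling fractions ν with 1/ν = 2 ± a/b are ν = b/(2b ± 1) (principal series) or ν = b/(2(b ± 1)) with b odd. -/
/-- **Arithmetic classification of filling fractions compatible with integrally quantized
Knizhnik–Zamolodchikov level**: let `a, b` be coprime positive integers with `a ≤ b`, and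
suppose there are integers `κ, m` with `κ ≠ −2` and a sign `ε ∈ {1, −1}` such that
`a(κ + 2) = 2εb + 2mb(κ + 2)` (i.e. `a/b ≡ ε·2/(κ+2) mod 2ℤ`).  Then either `a = 1` and
`κ` is even, or `a = 2` and both `b` and `κ` are odd.  (Hence the filling fractions
`ν` with `1/ν = 2 ± a/b` are `ν = b/(2b ± 1)` — the principal series — or
`ν = b/(2(b ± 1))` with `b` odd.) -/
theorem filling_fraction_classification
    (a b : ℕ) (ha : 0 < a) (hb : 0 < b) (hab : a ≤ b) (hcop : Nat.Coprime a b)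
    (κ m ε : ℤ) (hε : ε = 1 ∨ ε = -1) (hκ : κ ≠ -2)
    (heq : (a : ℤ) * (κ + 2) = 2 * ε * (b : ℤ) + 2 * m * (b : ℤ) * (κ + 2)) :
    (a = 1 ∧ Even κ) ∨ (a = 2 ∧ Odd b ∧ Odd κ) := by
  have hb0 : (b:ℤ) ≠ 0 := by positivity
  have hA1 : (1:ℤ) ≤ (a:ℤ) := by exact_mod_cast ha
  have hAB : (a:ℤ) ≤ (b:ℤ) := by exact_mod_cast hab
  have hB1 : (1:ℤ) ≤ (b:ℤ) := by exact_mod_cast hb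
  have hK0 : κ + 2 ≠ 0 := by omega
  have hcop' : IsCoprime (a:ℤ) (b:ℤ) := Nat.isCoprime_iff_coprime.mpr hcop
  have hBA : (b:ℤ) ∣ (a:ℤ) * (κ + 2) := ⟨2*ε + 2*m*(κ+2), by linear_combination heq⟩
  obtain ⟨t, ht⟩ := hcop'.symm.dvd_of_dvd_mul_left hBA
  rw [ht] at heq
  have ht0 : t ≠ 0 := by rintro rfl; simp at ht; omega
  have key : t * ((a:ℤ) - 2*m*b) = 2*ε := by
    apply mul_left_cancel₀ hb0
    linear_combination heq
  have hne : t.natAbs * ((a:ℤ) - 2*m*b).natAbs = 2 := by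
    rcases hε with h|h <;> subst h <;>
      simp [← Int.natAbs_mul, key]
  -- bounds on 2*m*b depending on sign of m
  have hneg : m ≤ -1 → 2*m*(b:ℤ) ≤ -2*b := by
    intro hm
    have := mul_le_mul_of_nonneg_right hm (by linarith : (0:ℤ) ≤ (b:ℤ))
    linarith
  have hpos : 1 ≤ m → 2*(b:ℤ) ≤ 2*m*(b:ℤ) := by
    intro hm
    have := mul_le_mul_of_nonneg_right hm (by linarith : (0:ℤ) ≤ (b:ℤ))
    linarith
  have htn : t.natAbs = 1 ∨ t.natAbs = 2 :=
    (Nat.dvd_prime Nat.prime_two).mp ⟨_, hne.symm⟩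
  rcases htn with htn | htn
  · -- t = ±1, u = ±2 : a = 2 case
    rw [htn, one_mul] at hne
    have hu : (a:ℤ) - 2*m*b = 2 ∨ (a:ℤ) - 2*m*b = -2 :=
      Int.natAbs_eq_iff.mp hne
    have ha2 : (a:ℤ) = 2 := by
      rcases hu with h|h
      · rcases lt_trichotomy m 0 with hm|hm|hm
        · have := hneg (by omega); linarith
        · subst hm; norm_num at h; omega
        · have := hpos (by omega); linarith
      · exfalso
        rcases lt_trichotomy m 0 with hm|hm|hm
        · have := hneg (by omega); linarith
        · subst hm; norm_num at h; omega
        · have h1 := hpos (by omega)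
          have hA2 : (a:ℤ) = 2 := by
            have : (2:ℤ) ∣ (a:ℤ) + 2 := ⟨m*b, by linarith [h]⟩
            omega
          have hb2 : (b:ℤ) = 2 := by linarith
          have e1 : a = 2 := by exact_mod_cast hA2
          have e2 : b = 2 := by exact_mod_cast hb2
          rw [e1, e2] at hcop
          exact absurd hcop (by decide)
    have ha2' : a = 2 := by exact_mod_cast ha2
    have hbodd : Odd b := by
      rcases Nat.even_or_odd b with he|ho
      · exfalso
        have h2 : (2:ℕ) = 1 := Nat.Coprime.eq_one_of_dvd (by rwa [ha2'] at hcop) he.two_dvd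
        omega
      · exact ho
    have hbs : b % 2 = 1 := Nat.odd_iff.mp hbodd
    have htval : t = 1 ∨ t = -1 := Int.natAbs_eq_iff.mp htn
    refine Or.inr ⟨ha2', hbodd, ?_⟩
    rcases htval with h|h <;> subst h <;> rw [Int.odd_iff] <;> omega
  · -- t = ±2, u = ±1 : a = 1 case
    rw [htn] at hne
    have hun : ((a:ℤ) - 2*m*b).natAbs = 1 := by omega
    have hu : (a:ℤ) - 2*m*b = 1 ∨ (a:ℤ) - 2*m*b = -1 :=
      Int.natAbs_eq_iff.mp hun
    have ha1 : (a:ℤ) = 1 := by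
      rcases hu with h|h
      · rcases lt_trichotomy m 0 with hm|hm|hm
        · have := hneg (by omega); linarith
        · subst hm; norm_num at h; omega
        · have := hpos (by omega); linarith
      · rcases lt_trichotomy m 0 with hm|hm|hm
        · have := hneg (by omega); linarith
        · subst hm; norm_num at h; omega
        · have := hpos (by omega); linarith
    have ha1' : a = 1 := by exact_mod_cast ha1
    have htval : t = 2 ∨ t = -2 := Int.natAbs_eq_iff.mp htn
    refine Or.inl ⟨ha1', ?_⟩
    rcases htval with h|h <;> subst h <;> rw [Int.even_iff] <;> omega
end
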